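/- arXiv:1108.1671 — 9 statements merged into one kernel-verified Lean document; each statement's English description precedes it below -/
import Mathlib

section
/- Let k ≥ 2, let G ⊆ R_k, and let n ≥ 2. Then Pol(G) contains a near-unanimity function of arity n+1 if and only if every essential predicate in [G] has arity at most n, i.e., ar([G] ∩ R̃_k) ≤ n. -/
/-- Tuples over `E_k = Fin k`. -/
abbrev Tuple (k n : ℕ) := Fin n → Fin k

/-- A predicate on `E_k`: an arity together with a set of tuples of that arity. -/
abbrev Pred (k : ℕ) := Σ n : ℕ, Set (Tuple k n)

/-- The binary equality predicate `σ_k^=`. -/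
def eqPred (k : ℕ) : Pred k := ⟨2, {t | t 0 = t 1}⟩

/-- The 0-ary predicate `false`. -/
def falsePred (k : ℕ) : Pred k := ⟨0, ∅⟩

/-- `[S]`: primitive positive closure of a set of predicates. -/
def ppClosure (k : ℕ) (S : Set (Pred k)) : Set (Pred k) :=
  { ρ | ∃ (l s : ℕ) (σ : Fin s → Pred k)
      (z : (i : Fin s) → Fin (σ i).1 → Fin (ρ.1 + l)),
      (∀ i, σ i ∈ S ∪ {eqPred k, falsePred k}) ∧
      ∀ x : Tuple k ρ.1, x ∈ ρ.2 ↔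
        ∃ y : Tuple k l, ∀ i, (fun j => Fin.append x y (z i j)) ∈ (σ i).2 }

/-- `AND(S)`: quantifier-free conjunctions of predicates of `S`, with no
repeated variable inside a single conjunct. -/
def andClosure (k : ℕ) (S : Set (Pred k)) : Set (Pred k) :=
  { ρ | ∃ (s : ℕ) (σ : Fin s → Pred k)
      (z : (i : Fin s) → Fin (σ i).1 → Fin ρ.1),
      (∀ i, σ i ∈ S) ∧ (∀ i, Function.Injective (z i)) ∧
      ∀ x : Tuple k ρ.1, x ∈ ρ.2 ↔ ∀ i, (fun j => x (z i j)) ∈ (σ i).2 }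

/-- An essential predicate: not a conjunction of predicates of smaller arity. -/
def Essential (k : ℕ) (ρ : Pred k) : Prop :=
  ρ ∉ andClosure k { σ : Pred k | σ.1 < ρ.1 }

/-- `f` preserves the predicate `ρ`. -/
def Preserves {k m : ℕ} (f : Tuple k m → Fin k) (ρ : Pred k) : Prop :=
  ∀ α : Fin m → Tuple k ρ.1, (∀ i, α i ∈ ρ.2) →
    (fun j => f fun i => α i j) ∈ ρ.2

/-- `f` is a near-unanimity function. -/
def IsNUF {k n : ℕ} (f : Tuple k n → Fin k) : Prop :=
  ∀ x y : Fin k, ∀ i : Fin n, f (Function.update (fun _ => y) i x) = y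

/-- `Pol(G)` contains a near-unanimity function of arity `n`. -/
def HasNUF (k : ℕ) (G : Set (Pred k)) (n : ℕ) : Prop :=
  ∃ f : Tuple k n → Fin k, IsNUF f ∧ ∀ ρ ∈ G, Preserves f ρ

/-- `SR_k`: the unary singleton predicates `ρ_{=,a}`. -/
def SR (k : ℕ) : Set (Pred k) := { ρ | ∃ a : Fin k, ρ = ⟨1, {t | t 0 = a}⟩ }

/-- The unary predicate `(x ∈ C)`. -/
def memPred (k : ℕ) (C : Set (Fin k)) : Pred k := ⟨1, { t | t 0 ∈ C }⟩

/-- `Strike(ρ)`: predicates obtained from `ρ` by existentially quantifying some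
coordinates and injectively renaming the rest. -/
def strike (k : ℕ) (ρ : Pred k) : Set (Pred k) :=
  { ρ' | ∃ (l : ℕ) (z : Fin ρ.1 → Fin (ρ'.1 + l)),
      Function.Injective z ∧
      ∀ x : Tuple k ρ'.1, x ∈ ρ'.2 ↔
        ∃ y : Tuple k l, (fun j => Fin.append x y (z j)) ∈ ρ.2 }

/-- The tuple `(d, e, α)`. -/
def pre2 {k m : ℕ} (d e : Fin k) (α : Tuple k m) : Tuple k (m + 2) :=
  Fin.cons d (Fin.cons e α)

/-- The `(m+2)`-ary chain predicate
`ρ(x_1,…,x_n) = ∃y_1…y_{n-1}, fst(x_1,y_1) ∧ ⋀ mid_i(y_i,x_{i+1},y_{i+1}) ∧ lst(y_{n-1},x_n)`. -/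
def chainPred (k m : ℕ) (fst lst : Set (Tuple k 2))
    (mid : Fin m → Set (Tuple k 3)) : Pred k :=
  ⟨m + 2, { x | ∃ y : Tuple k (m + 1),
      ![x 0, y 0] ∈ fst ∧
      (∀ i : Fin m, ![y i.castSucc, x i.succ.castSucc, y i.succ] ∈ mid i) ∧
      ![y (Fin.last m), x (Fin.last (m + 1))] ∈ lst }⟩

-- ========== auxiliary material ==========

/-- Projection of a predicate along a variable map. -/
def projPred (k : ℕ) (ρ : Pred k) (m' : ℕ) (z : Fin m' → Fin ρ.1) : Pred k :=
  ⟨m', { t | ∃ u ∈ ρ.2, ∀ j, t j = u (z j) }⟩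

lemma ppClosure_intro {k : ℕ} (G : Set (Pred k)) (ρ : Pred k) (l s : ℕ)
    (data : Fin s → Σ τ : Pred k, (Fin τ.1 → Fin (ρ.1 + l)))
    (h1 : ∀ i, (data i).1 ∈ G ∪ {eqPred k, falsePred k})
    (h2 : ∀ x : Tuple k ρ.1, x ∈ ρ.2 ↔
      ∃ y : Tuple k l, ∀ i, (fun j => Fin.append x y ((data i).2 j)) ∈ (data i).1.2) :
    ρ ∈ ppClosure k G :=
  ⟨l, s, fun i => (data i).1, fun i => (data i).2, h1, h2⟩

lemma append_split {k a b : ℕ} (Y : Tuple k (a + b)) :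
    Fin.append (fun q => Y (Fin.castAdd b q)) (fun q => Y (Fin.natAdd a q)) = Y := by
  funext v
  induction v using Fin.addCases with
  | left j => rw [Fin.append_left]
  | right j => rw [Fin.append_right]

lemma append_distrib {k m a b : ℕ} (f : Tuple k m → Fin k) (α : Fin m → Tuple k a)
    (w : Fin m → Tuple k b) (v : Fin (a + b)) :
    Fin.append (fun j => f (fun i => α i j)) (fun q => f (fun i => w i q)) v
      = f (fun i => Fin.append (α i) (w i) v) := by
  induction v using Fin.addCases with
  | left j => simp [Fin.append_left]
  | right j => simp [Fin.append_right]

/-- Polymorphisms preserve all pp-definable predicates. -/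
lemma preserves_ppClosure {k m : ℕ} (hm : 0 < m) (f : Tuple k m → Fin k)
    {G : Set (Pred k)} (hf : ∀ ρ ∈ G, Preserves f ρ)
    {ρ : Pred k} (hρ : ρ ∈ ppClosure k G) : Preserves f ρ := by
  obtain ⟨l, s, σ, zρ, hσ, hiff⟩ := hρ
  have hpres : ∀ i, Preserves f (σ i) := by
    intro i
    rcases hσ i with h | h
    · exact hf _ h
    · rcases h with h | h
      · rw [h]
        intro α hα
        exact congrArg f (funext fun i => hα i)
      · rw [Set.mem_singleton_iff.mp h]
        intro α hα
        exact absurd (hα ⟨0, hm⟩) (Set.notMem_empty _)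
  intro α hα
  choose w hw using fun i => (hiff (α i)).1 (hα i)
  refine (hiff _).2 ⟨fun q => f (fun i => w i q), fun c => ?_⟩
  simp only [append_distrib]
  exact hpres c (fun i => fun j => Fin.append (α i) (w i) (zρ c j)) (fun i => hw i c)

/-- Projections of pp-definable predicates are pp-definable. -/
lemma proj_mem_ppClosure {k : ℕ} {G : Set (Pred k)} {ρ : Pred k}
    (hρ : ρ ∈ ppClosure k G) (m' : ℕ) (z : Fin m' → Fin ρ.1) :
    projPred k ρ m' z ∈ ppClosure k G := by
  obtain ⟨l, s, σ, zρ, hσ, hiff⟩ := hρ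
  refine ppClosure_intro G (projPred k ρ m' z) (ρ.1 + l) (s + m')
    (Fin.addCases (motive := fun _ => Σ τ : Pred k, (Fin τ.1 → Fin (m' + (ρ.1 + l))))
      (fun i => ⟨σ i, fun j => Fin.natAdd m' (zρ i j)⟩)
      (fun j => ⟨eqPred k,
        ![Fin.castAdd (ρ.1 + l) j, Fin.natAdd m' (Fin.castAdd l (z j))]⟩))
    ?_ ?_
  · intro i
    induction i using Fin.addCases with
    | left i => rw [Fin.addCases_left]; exact hσ i
    | right j =>
      rw [Fin.addCases_right]
      exact Or.inr (Set.mem_insert _ _)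
  · intro (x : Tuple k m')
    simp only [projPred, Set.mem_setOf_eq]
    constructor
    · rintro ⟨u, hu, hx⟩
      obtain ⟨y, hy⟩ := (hiff u).1 hu
      refine ⟨Fin.append u y, fun i => ?_⟩
      induction i using Fin.addCases with
      | left i =>
        rw [Fin.addCases_left]
        simp only [Fin.append_right]
        exact hy i
      | right j =>
        rw [Fin.addCases_right]
        show (fun j' => Fin.append x (Fin.append u y)
            (![Fin.castAdd (ρ.1 + l) j, Fin.natAdd m' (Fin.castAdd l (z j))] j'))
            ∈ {t : Tuple k 2 | t 0 = t 1}
        simp only [Set.mem_setOf_eq, Matrix.cons_val_zero, Matrix.cons_val_one,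
          Matrix.head_cons, Fin.append_left, Fin.append_right]
        exact hx j
    · rintro ⟨Y, hY⟩
      refine ⟨fun q => Y (Fin.castAdd l q), ?_, fun j => ?_⟩
      · refine (hiff _).2 ⟨fun q => Y (Fin.natAdd ρ.1 q), fun i => ?_⟩
        have h := hY (Fin.castAdd m' i)
        rw [Fin.addCases_left] at h
        simp only [Fin.append_right] at h
        simpa only [append_split] using h
      · have h := hY (Fin.natAdd s j)
        rw [Fin.addCases_right] at h
        have h' : (fun j' => Fin.append x Y
            (![Fin.castAdd (ρ.1 + l) j, Fin.natAdd m' (Fin.castAdd l (z j))] j'))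
            ∈ {t : Tuple k 2 | t 0 = t 1} := h
        simpa only [projPred, Set.mem_setOf_eq, Matrix.cons_val_zero, Matrix.cons_val_one,
          Matrix.head_cons, Fin.append_left, Fin.append_right] using h'

lemma proj_comp_subset {k : ℕ} (ρ : Pred k) {a b : ℕ} (z : Fin a → Fin ρ.1)
    (w : Fin b → Fin a) (t : Tuple k b)
    (h : t ∈ (projPred k ρ b (fun j => z (w j))).2) :
    t ∈ (projPred k (projPred k ρ a z) b w).2 := by
  obtain ⟨u, hu, hv⟩ := h
  exact ⟨fun j => u (z j), ⟨u, hu, fun _ => rfl⟩, hv⟩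

lemma proj_subset_conjunct {k : ℕ} {ρ : Pred k} {s : ℕ} {σ : Fin s → Pred k}
    {zs : (i : Fin s) → Fin (σ i).1 → Fin ρ.1}
    (hiff : ∀ x : Tuple k ρ.1, x ∈ ρ.2 ↔ ∀ i, (fun j => x (zs i j)) ∈ (σ i).2)
    (i : Fin s) : (projPred k ρ (σ i).1 (zs i)).2 ⊆ (σ i).2 := by
  rintro t ⟨u, hu, hv⟩
  have h := (hiff u).1 hu i
  rwa [show t = fun j => u (zs i j) from funext hv]

/-- Decomposability: if every essential pp-definable predicate has arity ≤ n,
then every pp-definable predicate is determined by its ≤ n-ary projections. -/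
lemma decomp {k n : ℕ} {G : Set (Pred k)}
    (H : ∀ ρ ∈ ppClosure k G, Essential k ρ → ρ.1 ≤ n) :
    ∀ (M : ℕ) (ρ : Pred k), ρ ∈ ppClosure k G → ρ.1 ≤ M →
      ∀ x : Tuple k ρ.1,
        (∀ m', m' ≤ n → ∀ z : Fin m' → Fin ρ.1, Function.Injective z →
          (fun j => x (z j)) ∈ (projPred k ρ m' z).2) →
        x ∈ ρ.2 := by
  intro M
  induction M with
  | zero =>
    intro ρ hρ hM x hx
    obtain ⟨u, hu, hv⟩ := hx ρ.1 (Nat.le_of_lt_succ (by omega)) (fun j => j) (fun a b h => h)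
    exact Set.mem_of_eq_of_mem (funext fun j => hv j) hu
  | succ M ih =>
    intro ρ hρ hM x hx
    by_cases hle : ρ.1 ≤ n
    · obtain ⟨u, hu, hv⟩ := hx ρ.1 hle (fun j => j) (fun a b h => h)
      exact Set.mem_of_eq_of_mem (funext fun j => hv j) hu
    · have hNE : ¬ Essential k ρ := fun hE => absurd (H ρ hρ hE) hle
      have hdc : ρ ∈ andClosure k {σ : Pred k | σ.1 < ρ.1} := not_not.mp hNE
      obtain ⟨s, σ, zs, hσ, hinj, hiff⟩ := hdc
      refine (hiff x).2 fun i => ?_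
      apply proj_subset_conjunct hiff i
      refine ih (projPred k ρ (σ i).1 (zs i)) (proj_mem_ppClosure hρ _ _)
        (by have := hσ i; simp only [Set.mem_setOf_eq] at this
            show (σ i).1 ≤ M; omega) (fun j => x (zs i j)) ?_
      intro m'' hm'' w hw
      have hx' := hx m'' hm'' (fun j => zs i (w j)) ((hinj i).comp hw)
      exact proj_comp_subset ρ (zs i) w _ hx'

lemma exists_finite_inter {α : Type*} [Finite α] (S : Set (Set α)) :
    ∃ (s : ℕ) (F : Fin s → Set α), (∀ i, F i ∈ S) ∧ (⋂ i, F i) = ⋂₀ S := by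
  classical
  have hch : ∀ p : α, p ∉ ⋂₀ S → ∃ A, A ∈ S ∧ p ∉ A := by
    intro p hp
    rw [Set.mem_sInter] at hp
    push_neg at hp
    exact hp
  choose! A hAS hpA using hch
  let ι := {p : α // p ∉ ⋂₀ S}
  have : Fintype ι := Fintype.ofFinite ι
  refine ⟨Fintype.card ι, fun i => A ((Fintype.equivFin ι).symm i).1, fun i => hAS _ (((Fintype.equivFin ι).symm i)).2, ?_⟩
  apply Set.Subset.antisymm
  · intro q hq
    rw [Set.mem_sInter]
    intro B hB
    by_contra hqB
    have hq' : q ∉ ⋂₀ S := fun h => hqB (h B hB)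
    have := Set.mem_iInter.mp hq (Fintype.equivFin ι ⟨q, hq'⟩)
    rw [Equiv.symm_apply_apply] at this
    exact hpA q hq' this
  · intro q hq
    exact Set.mem_iInter.mpr fun i => hq _ (hAS _ (((Fintype.equivFin ι).symm i)).2)

/-- The predicate of arity `k^(n+1)` consisting of all `(n+1)`-ary polymorphisms of `G`. -/
def polyPred (k n : ℕ) (G : Set (Pred k)) : Pred k :=
  ⟨k ^ (n+1), { w | ∀ ρ ∈ G, Preserves (fun t : Tuple k (n+1) => w (finFunctionFinEquiv t)) ρ }⟩

lemma polyPred_mem_ppClosure (k n : ℕ) (G : Set (Pred k)) :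
    polyPred k n G ∈ ppClosure k G := by
  classical
  set e : Tuple k (n+1) ≃ Fin (k ^ (n+1)) := finFunctionFinEquiv with he
  set S : Set (Set (Tuple k (k ^ (n+1)))) :=
    { A | ∃ ρ, ρ ∈ G ∧ ∃ α : Fin (n+1) → Tuple k ρ.1, (∀ i, α i ∈ ρ.2) ∧
        A = { w | (fun j => w (e (fun i => α i j))) ∈ ρ.2 } } with hS
  have hPS : (polyPred k n G).2 = ⋂₀ S := by
    ext (w : Tuple k (k ^ (n+1)))
    refine Iff.trans ?_ Set.mem_sInter.symm
    constructor
    · rintro hw B ⟨ρ, hρ, α, hα, rfl⟩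
      exact hw ρ hρ α hα
    · intro hw ρ hρ α hα
      exact hw _ ⟨ρ, hρ, α, hα, rfl⟩
  obtain ⟨s, F, hF, hinter⟩ := exists_finite_inter S
  have hF' := hF
  simp only [hS, Set.mem_setOf_eq] at hF'
  choose ρs hρG αs hα hFeq using hF'
  refine ppClosure_intro G (polyPred k n G) 0 s
    (fun i => ⟨ρs i, fun j => Fin.castAdd 0 (e (fun q => αs i q j))⟩)
    (fun i => Or.inl (hρG i)) ?_
  show ∀ x : Tuple k (k ^ (n+1)), x ∈ (polyPred k n G).2 ↔ ∃ y : Tuple k 0,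
    ∀ i, (fun j => Fin.append x y (Fin.castAdd 0 (e (fun q => αs i q j)))) ∈ (ρs i).2
  intro (x : Tuple k (k ^ (n+1)))
  have hx : x ∈ (polyPred k n G).2 ↔ ∀ i, x ∈ F i := by
    rw [show ((polyPred k n G).2 : Set (Tuple k (k ^ (n+1)))) = ⋂₀ S from hPS, ← hinter]
    exact Set.mem_iInter
  refine Iff.trans hx ?_
  constructor
  · intro h
    refine ⟨fun q => q.elim0, fun i => ?_⟩
    simp only [Fin.append_left]
    have := h i
    rw [hFeq i] at this
    exact this
  · rintro ⟨y, hy⟩ i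
    rw [hFeq i]
    have := hy i
    simpa only [Fin.append_left, Set.mem_setOf_eq] using this

theorem nuf_iff_essential_arity_le (k : ℕ) (hk : 2 ≤ k) (G : Set (Pred k))
    (n : ℕ) (hn : 2 ≤ n) :
    HasNUF k G (n + 1) ↔ ∀ ρ ∈ ppClosure k G, Essential k ρ → ρ.1 ≤ n := by
  constructor
  · -- forward: an NUF forces all essential pp-definable predicates to have arity ≤ n
    rintro ⟨f, hNUF, hfG⟩ ρ hρ hEss
    by_contra hgt
    push_neg at hgt
    apply hEss
    have hpre : Preserves f ρ := preserves_ppClosure (by omega) f hfG hρ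
    obtain ⟨M, R⟩ := ρ
    simp only at hgt hpre ⊢
    obtain ⟨m', rfl⟩ : ∃ m', M = m' + 1 := ⟨M - 1, by omega⟩
    refine ⟨m' + 1, fun i => projPred k ⟨m'+1, R⟩ m' (Fin.succAbove i),
      fun i j => i.succAbove j, fun i => Nat.lt_succ_self m',
      fun i => Fin.succAbove_right_injective, fun x => ?_⟩
    constructor
    · intro hx i
      exact ⟨x, hx, fun j => rfl⟩
    · intro hx
      choose full hfull hagree using hx
      have hag : ∀ (i j : Fin (m'+1)), j ≠ i → full i j = x j := by
        intro i j hne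
        obtain ⟨j', hj'⟩ := Fin.exists_succAbove_eq hne
        rw [← hj']
        exact (hagree i j').symm
      have hm'n : n + 1 ≤ m' + 1 := by omega
      have hkey := hpre (fun i => full (Fin.castLE hm'n i)) (fun i => hfull _)
      have hxeq : (fun j => f (fun i => full (Fin.castLE hm'n i) j)) = x := by
        funext j
        by_cases hj : (j : ℕ) < n + 1
        · set i0 : Fin (n+1) := ⟨j, hj⟩ with hi0
          have hcst : Fin.castLE hm'n i0 = j := rfl
          have h1 : (fun i => full (Fin.castLE hm'n i) j)
              = Function.update (fun _ => x j) i0 (full (Fin.castLE hm'n i0) j) := by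
            funext i
            by_cases hii : i = i0
            · subst hii; simp
            · rw [Function.update_of_ne hii]
              apply hag
              intro h'
              exact hii (Fin.castLE_injective hm'n (by rw [hcst, ← h']))
          rw [h1, hNUF (full (Fin.castLE hm'n i0) j) (x j) i0]
        · have h1 : (fun i => full (Fin.castLE hm'n i) j) = (fun _ : Fin (n+1) => x j) := by
            funext i
            apply hag
            intro h'
            apply hj
            rw [h']
            simpa using i.isLt
          rw [h1, ← Function.update_eq_self (0 : Fin (n+1)) (fun _ => x j)]
          exact hNUF (x j) (x j) 0
      exact Set.mem_of_eq_of_mem hxeq.symm hkey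
  · -- converse: decomposability yields a near-unanimity polymorphism
    intro H
    classical
    set e : Tuple k (n+1) ≃ Fin (k ^ (n+1)) := finFunctionFinEquiv with he
    set ι := Fin k × Fin k × Fin (n+1) with hι
    have : Fintype ι := inferInstance
    set idx : ι ≃ Fin (Fintype.card ι) := Fintype.equivFin ι with hidx
    set nu : ι → Tuple k (n+1) := fun p => Function.update (fun _ => p.2.1) p.2.2 p.1 with hnu
    set c : Fin (Fintype.card ι) → Fin (k ^ (n+1)) := fun q => e (nu (idx.symm q)) with hc
    set v : Tuple k (Fintype.card ι) := fun q => (idx.symm q).2.1 with hv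
    have hQpp : projPred k (polyPred k n G) (Fintype.card ι) c ∈ ppClosure k G :=
      proj_mem_ppClosure (polyPred_mem_ppClosure k n G) _ _
    have hvQ : v ∈ (projPred k (polyPred k n G) (Fintype.card ι) c).2 := by
      apply decomp H (Fintype.card ι) _ hQpp (le_refl _)
      intro m' hm' z hz
      -- find a coordinate avoided by all the selected constraints
      set B : Finset (Fin (n+1)) := Finset.image (fun j => (idx.symm (z j)).2.2) Finset.univ with hB
      have hBcard : B.card ≤ n := le_trans (Finset.card_image_le.trans (by simp)) hm'
      obtain ⟨c0, hc0⟩ : ∃ c0 : Fin (n+1), c0 ∉ B := by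
        by_contra hcon
        push_neg at hcon
        have hsub : (Finset.univ : Finset (Fin (n+1))) ⊆ B := fun x _ => hcon x
        have := Finset.card_le_card hsub
        simp only [Finset.card_univ, Fintype.card_fin] at this
        omega
      -- the projection to coordinate c0 is a polymorphism meeting the constraints
      set w : Tuple k (k ^ (n+1)) := fun r => e.symm r c0 with hw
      have hwP : w ∈ (polyPred k n G).2 := by
        intro ρ hρ α hα
        have : (fun j => (fun t : Tuple k (n+1) => w (e t)) (fun i => α i j)) = α c0 := by
          funext j
          simp [hw, Equiv.symm_apply_apply]
        rw [this]
        exact hα c0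
      refine ⟨fun q => w (c q), ⟨w, hwP, fun _ => rfl⟩, fun j => ?_⟩
      -- value check
      show v (z j) = w (c (z j))
      rw [hc, hw]
      simp only [Equiv.symm_apply_apply]
      have hne : c0 ≠ (idx.symm (z j)).2.2 := by
        intro h
        exact hc0 (by rw [hB]; exact Finset.mem_image.mpr ⟨j, Finset.mem_univ _, h.symm⟩)
      show (idx.symm (z j)).2.1 = Function.update (fun _ => (idx.symm (z j)).2.1)
        (idx.symm (z j)).2.2 (idx.symm (z j)).1 c0
      rw [Function.update_of_ne hne]
    obtain ⟨w0, hw0, hvals⟩ := hvQ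
    refine ⟨fun t => w0 (e t), ?_, fun ρ hρ => hw0 ρ hρ⟩
    intro a b i
    have h := hvals (idx (a, b, i))
    simp only [hv, hc, hnu, Equiv.symm_apply_apply] at h
    exact h.symm
end

section
/- Let k ≥ 2 and let G ⊆ R_k. Then Pol(G) contains a near-unanimity function (of some arity ≥ 3) if and only if the set [G] ∩ R̃_k of essential predicates in [G] is finite. -/
-- L2
lemma append_f {k n m l : ℕ} (f : Tuple k n → Fin k) (x : Fin n → Tuple k m)
    (y : Fin n → Tuple k l) (p : Fin (m + l)) :
    f (fun t => Fin.append (x t) (y t) p) =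
      Fin.append (fun a => f fun t => x t a) (fun b => f fun t => y t b) p := by
  induction p using Fin.addCases with
  | left a => simp [Fin.append_left]
  | right b => simp [Fin.append_right]

-- preservation of pp closure
lemma preserves_pp {k n : ℕ} (hn : 1 ≤ n) {G : Set (Pred k)} (f : Tuple k n → Fin k)
    (hf : ∀ ρ ∈ G, Preserves f ρ) : ∀ ρ ∈ ppClosure k G, Preserves f ρ := by
  rintro ⟨m, P⟩ ⟨l, s, σ, z, hσ, hiff⟩ α hα
  have hpre : ∀ i, Preserves f (σ i) := by
    intro i
    rcases hσ i with h | h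
    · exact hf _ h
    · rcases h with h | h
      · rw [h]
        show Preserves f ⟨2, {t : Tuple k 2 | t 0 = t 1}⟩
        intro β hβ
        show f (fun t => β t 0) = f (fun t => β t 1)
        congr 1; funext t; exact hβ t
      · simp only [Set.mem_singleton_iff] at h
        rw [h]
        show Preserves f ⟨0, (∅ : Set (Tuple k 0))⟩
        intro β hβ
        exact absurd (hβ ⟨0, hn⟩) (by simp)
  -- choose witnesses
  have hx : ∀ t, ∃ y : Tuple k l, ∀ i, (fun j => Fin.append (α t) y (z i j)) ∈ (σ i).2 := by
    intro t; exact (hiff (α t)).mp (hα t)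
  choose ys hys using hx
  refine (hiff _).mpr ⟨fun b => f fun t => ys t b, fun i => ?_⟩
  have := hpre i (fun t => fun j => Fin.append (α t) (ys t) (z i j)) (fun t => hys t i)
  convert this using 1
  funext j
  exact (append_f f α ys (z i j)).symm

-- Baker-Pixley decomposition: forward
lemma bp_not_essential {k n m : ℕ} (hn3 : 3 ≤ n) (hnm : n ≤ m + 1)
    (f : Tuple k n → Fin k) (hf : IsNUF f) (P : Set (Tuple k (m + 1)))
    (hp : Preserves f ⟨m + 1, P⟩) : ¬ Essential k ⟨m + 1, P⟩ := by
  intro hess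
  apply hess
  refine ⟨n, fun i => ⟨m, {t | ∃ β ∈ P, ∀ j, β ((Fin.castLE hnm i).succAbove j) = t j}⟩,
    fun i => (Fin.castLE hnm i).succAbove, fun i => Nat.lt_succ_self m,
    fun i => Fin.succAbove_right_injective, fun x => ?_⟩
  constructor
  · intro hx i
    exact ⟨x, hx, fun j => rfl⟩
  · intro h
    choose βs hβsP hβs using h
    have key : (fun j => f fun i => βs i j) ∈ P := hp βs hβsP
    have : (fun j => f fun i => βs i j) = x := by
      funext j
      by_cases hj : ∃ i0 : Fin n, Fin.castLE hnm i0 = j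
      · obtain ⟨i0, hi0⟩ := hj
        have heq : (fun i => βs i j) = Function.update (fun _ => x j) i0 (βs i0 j) := by
          funext i
          by_cases hi : i = i0
          · subst hi; simp
          · rw [Function.update_of_ne hi]
            have hne : j ≠ Fin.castLE hnm i := by
              rw [← hi0]; intro hc
              exact hi (Fin.castLE_injective hnm hc.symm)
            obtain ⟨j', hj'⟩ := Fin.exists_succAbove_eq hne
            rw [← hj']
            simpa using hβs i j'
        rw [heq, hf]
      · push_neg at hj
        have heq : (fun i => βs i j) = (fun _ : Fin n => x j) := by
          funext i
          obtain ⟨j', hj'⟩ := Fin.exists_succAbove_eq (hj i).symm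
          rw [← hj']
          simpa using hβs i j' 
        rw [heq]
        have := hf (x j) (x j) ⟨0, by omega⟩
        rwa [Function.update_eq_self] at this
    rwa [this] at key

-- finiteness of bounded-arity predicates
lemma finite_bounded_arity (k n : ℕ) : {ρ : Pred k | ρ.1 < n}.Finite := by
  have heq : {ρ : Pred k | ρ.1 < n} =
      ⋃ m ∈ Finset.range n, (fun P => (⟨m, P⟩ : Pred k)) '' Set.univ := by
    ext ⟨m, P⟩
    constructor
    · intro h
      exact Set.mem_biUnion (Finset.mem_coe.mpr (Finset.mem_range.mpr h))
        ⟨P, Set.mem_univ _, rfl⟩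
    · intro h
      obtain ⟨m', hm', P', -, hP⟩ := Set.mem_iUnion₂.mp h
      obtain ⟨rfl, -⟩ := Sigma.mk.inj_iff.mp hP
      exact Finset.mem_range.mp hm'
  rw [heq]
  apply Set.Finite.biUnion (Finset.finite_toSet _)
  intro m _
  exact (Set.finite_univ (α := Set (Tuple k m))).image _

lemma strike_pp {k : ℕ} (G : Set (Pred k)) {m : ℕ} {P : Set (Tuple k m)}
    (h : (⟨m, P⟩ : Pred k) ∈ ppClosure k G) {r : ℕ} (S : Fin r → Fin m) :
    (⟨r, {t : Tuple k r | ∃ β ∈ P, ∀ j, β (S j) = t j}⟩ : Pred k) ∈ ppClosure k G := by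
  obtain ⟨l, s, σ, z, hσ, hiff⟩ := h
  simp only at hiff z
  -- combined conjunct data
  set c : Fin (r + s) → Σ p : Pred k, Fin p.1 → Fin (r + (m + l)) :=
    Fin.addCases
      (fun j => ⟨eqPred k, ![Fin.castAdd (m + l) j, Fin.natAdd r (Fin.castAdd l (S j))]⟩)
      (fun i' => ⟨σ i', fun j => Fin.natAdd r (z i' j)⟩) with hc
  have hcl : ∀ j : Fin r, c (Fin.castAdd s j) =
      ⟨eqPred k, ![Fin.castAdd (m + l) j, Fin.natAdd r (Fin.castAdd l (S j))]⟩ := by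
    intro j; rw [hc]; exact Fin.addCases_left j
  have hcr : ∀ i' : Fin s, c (Fin.natAdd r i') =
      ⟨σ i', fun j => Fin.natAdd r (z i' j)⟩ := by
    intro j; rw [hc]; exact Fin.addCases_right j
  refine ⟨m + l, r + s, fun i => (c i).1, fun i => (c i).2, ?_, ?_⟩
  · intro i
    induction i using Fin.addCases with
    | left j => dsimp only; rw [hcl]; exact Or.inr (Or.inl rfl)
    | right i' => dsimp only; rw [hcr]; exact hσ i'
  · intro t
    simp only [Set.mem_setOf_eq]
    constructor
    · rintro ⟨β, hβP, hβS⟩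
      obtain ⟨y, hy⟩ := (hiff β).mp hβP
      refine ⟨Fin.append β y, fun i => ?_⟩
      induction i using Fin.addCases with
      | left j =>
        beta_reduce
        rw [hcl j]
        show Fin.append t (Fin.append β y) (Fin.castAdd (m + l) j) =
          Fin.append t (Fin.append β y) (Fin.natAdd r (Fin.castAdd l (S j)))
        rw [Fin.append_left, Fin.append_right, Fin.append_left]
        exact (hβS j).symm
      | right i' =>
        beta_reduce
        rw [hcr i']
        have : (fun j => Fin.append t (Fin.append β y) (Fin.natAdd r (z i' j)))
            = fun j => Fin.append β y (z i' j) := by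
          funext j; rw [Fin.append_right]
        rw [this]
        exact hy i'
    · rintro ⟨w, hw⟩
      set β : Tuple k m := fun v => w (Fin.castAdd l v) with hβ
      set y : Tuple k l := fun v => w (Fin.natAdd m v) with hy
      have hwby : w = Fin.append β y := by
        funext p
        induction p using Fin.addCases with
        | left a => rw [Fin.append_left]
        | right b => rw [Fin.append_right]
      have hβP : β ∈ P := by
        refine (hiff β).mpr ⟨y, fun i' => ?_⟩
        have := hw (Fin.natAdd r i')
        beta_reduce at this
        rw [hcr i'] at this
        have h2 : (fun j => Fin.append t w (Fin.natAdd r (z i' j)))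
            = fun j => Fin.append β y (z i' j) := by
          funext j; rw [Fin.append_right, hwby]
        rwa [h2] at this
      refine ⟨β, hβP, fun j => ?_⟩
      have := hw (Fin.castAdd s j)
      beta_reduce at this
      rw [hcl j] at this
      have h2 : Fin.append t w (Fin.castAdd (m + l) j) =
          Fin.append t w (Fin.natAdd r (Fin.castAdd l (S j))) := this
      rw [Fin.append_left, Fin.append_right] at h2
      exact h2.symm


lemma decomp_s3 {k n : ℕ} (hn : 3 ≤ n) (G : Set (Pred k))
    (hbound : ∀ ρ ∈ ppClosure k G, Essential k ρ → ρ.1 < n) :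
    ∀ m, ∀ P : Set (Tuple k m), (⟨m, P⟩ : Pred k) ∈ ppClosure k G →
      ∀ x : Tuple k m,
        (∀ r ≤ n - 1, ∀ S : Fin r → Fin m, Function.Injective S →
          ∃ β ∈ P, ∀ j, β (S j) = x (S j)) → x ∈ P := by
  intro m
  induction m using Nat.strong_induction_on with
  | _ m IH =>
    intro P hpp x hx
    by_cases hm : m ≤ n - 1
    · obtain ⟨β, hβP, hβ⟩ := hx m hm id Function.injective_id
      have : β = x := funext fun j => hβ j
      rwa [← this]
    · -- m ≥ n, hence not essential
      have hne : ¬ Essential k (⟨m, P⟩ : Pred k) := by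
        intro hess
        have := hbound _ hpp hess
        simp only at this
        omega
      rw [Essential, not_not] at hne
      obtain ⟨s, σ, z, hlt, hinj, hiff⟩ := hne
      simp only at z hiff hlt
      refine (hiff x).mpr fun i => ?_
      -- project to z i
      have hQpp := strike_pp G hpp (z i)
      have hQmem : (fun j => x (z i j)) ∈
          {t : Tuple k (σ i).1 | ∃ β ∈ P, ∀ j, β (z i j) = t j} := by
        apply IH (σ i).1 (hlt i) _ hQpp
        intro r hr T hT
        obtain ⟨β, hβP, hβ⟩ := hx r hr (fun j => z i (T j)) ((hinj i).comp hT)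
        exact ⟨fun v => β (z i v), ⟨β, hβP, fun _ => rfl⟩, fun j => hβ j⟩
      obtain ⟨β, hβP, hβ⟩ := hQmem
      have : (fun j => x (z i j)) = fun j => β (z i j) := funext fun j => (hβ j).symm
      rw [this]
      exact (hiff β).mp hβP i


lemma exists_ne_pair {n : ℕ} (hn : 3 ≤ n) (a b : Fin n) : ∃ i : Fin n, i ≠ a ∧ i ≠ b := by
  have hcard : ({a, b} : Finset (Fin n)).card ≤ 2 :=
    (Finset.card_insert_le _ _).trans (by simp)
  have hne : (({a, b} : Finset (Fin n))ᶜ).Nonempty := by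
    rw [← Finset.card_pos, Finset.card_compl]
    simp only [Fintype.card_fin]
    omega
  obtain ⟨i, hi⟩ := hne
  simp only [Finset.mem_compl, Finset.mem_insert, Finset.mem_singleton, not_or] at hi
  exact ⟨i, hi.1, hi.2⟩


lemma nuf_of_bound {k n : ℕ} (hn : 3 ≤ n) (G : Set (Pred k))
    (hbound : ∀ ρ ∈ ppClosure k G, Essential k ρ → ρ.1 < n) : HasNUF k G n := by
  classical
  set N := k ^ n with hN
  have hcard : Fintype.card (Tuple k n) = N := by simp [hN]
  set e : Fin N ≃ Tuple k n := (Fintype.equivFinOfCardEq hcard).symm with he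
  -- the generated relation Γ
  set I := { q : Σ ρ : Pred k, Fin ρ.1 → Fin N //
      q.1 ∈ G ∧ ∀ i : Fin n, (fun j => e (q.2 j) i) ∈ q.1.2 } with hI
  set F : I → Set (Tuple k N) := fun q => { g | (fun j => g (q.1.2 j)) ∈ q.1.1.2 } with hF
  set Γ : Set (Tuple k N) := ⋂ q : I, F q with hΓ
  have hpi : ∀ i : Fin n, (fun v => e v i) ∈ Γ := by
    intro i
    exact Set.mem_iInter.mpr fun q => q.2.2 i
  -- finite subfamily
  have hfin : (Set.range F).Finite := Set.toFinite _
  haveI := hfin.fintype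
  set s := Fintype.card (Set.range F) with hs
  set eqv : Set.range F ≃ Fin s := Fintype.equivFin _ with heqv
  have hj : ∀ t : Fin s, ∃ q : I, F q = (eqv.symm t : Set (Tuple k N)) :=
    fun t => (eqv.symm t).2
  choose jdx hjdx using hj
  have hΓeq : Γ = ⋂ t : Fin s, F (jdx t) := by
    apply Set.Subset.antisymm
    · exact Set.subset_iInter fun t => Set.iInter_subset _ _
    · intro x hx
      apply Set.mem_iInter.mpr
      intro q
      have hmem : F q ∈ Set.range F := Set.mem_range_self q
      have : F q = F (jdx (eqv ⟨F q, hmem⟩)) := by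
        rw [hjdx, Equiv.symm_apply_apply]
      rw [this]
      exact Set.mem_iInter.mp hx _
  -- Γ is pp-definable
  have hΓpp : (⟨N, Γ⟩ : Pred k) ∈ ppClosure k G := by
    refine ⟨0, s, fun t => (jdx t).1.1,
      fun t => fun jj => Fin.castAdd 0 ((jdx t).1.2 jj),
      fun t => Set.mem_union_left _ (jdx t).2.1, fun x => ?_⟩
    simp only
    constructor
    · intro hx
      refine ⟨Fin.elim0, fun t => ?_⟩
      have hx' : x ∈ F (jdx t) := by rw [hΓeq] at hx; exact Set.mem_iInter.mp hx t
      have heq2 : (fun jj => Fin.append x Fin.elim0 (Fin.castAdd 0 ((jdx t).1.2 jj)))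
          = fun jj => x ((jdx t).1.2 jj) := funext fun jj => Fin.append_left _ _ _
      rw [heq2]
      exact hx'
    · rintro ⟨y, hy⟩
      rw [hΓeq]
      apply Set.mem_iInter.mpr
      intro t
      have := hy t
      have heq2 : (fun jj => Fin.append x y (Fin.castAdd 0 ((jdx t).1.2 jj)))
          = fun jj => x ((jdx t).1.2 jj) := funext fun jj => Fin.append_left _ _ _
      rwa [heq2] at this
  -- near-unanimity inputs
  set Uset : Finset (Fin N) :=
    Finset.univ.filter (fun v => ∃ y i0 x0, e v = Function.update (fun _ => y) i0 x0)
    with hU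
  set r := Uset.card with hr
  set Siso := Uset.orderIsoOfFin rfl with hSiso
  set S : Fin r → Fin N := fun t => (Siso t : Fin N) with hS
  have hNUt : ∀ t : Fin r, ∃ y i0 x0,
      e (S t) = Function.update (fun _ => y) i0 x0 := by
    intro t
    exact (Finset.mem_filter.mp (Siso t).2).2
  choose τ i0f x0f hτ using hNUt
  -- uniqueness of the repeated value
  have huniq : ∀ (y y' : Fin k) (i0 i0' : Fin n) (x0 x0' : Fin k),
      Function.update (fun _ : Fin n => y) i0 x0 =
        Function.update (fun _ : Fin n => y') i0' x0' → y = y' := by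
    intro y y' i0 i0' x0 x0' hEq
    obtain ⟨i, h1, h2⟩ := exists_ne_pair hn i0 i0'
    have := congrFun hEq i
    rwa [Function.update_of_ne h1, Function.update_of_ne h2] at this
  -- the projected relation and decomposability
  set Q : Set (Tuple k r) := {t | ∃ β ∈ Γ, ∀ j, β (S j) = t j} with hQ
  have hQpp : (⟨r, Q⟩ : Pred k) ∈ ppClosure k G := strike_pp G hΓpp S
  have hτQ : τ ∈ Q := by
    apply decomp_s3 hn G hbound r Q hQpp τ
    intro r' hr' T hT
    have hdev : ∃ i : Fin n, ∀ jj : Fin r', i0f (T jj) ≠ i := by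
      by_contra hc
      push_neg at hc
      have hsurj : Function.Surjective (fun jj => i0f (T jj)) := fun i => hc i
      have := Fintype.card_le_of_surjective _ hsurj
      simp only [Fintype.card_fin] at this
      omega
    obtain ⟨istar, histar⟩ := hdev
    refine ⟨fun t => e (S t) istar, ⟨fun v => e v istar, hpi istar, fun _ => rfl⟩,
      fun jj => ?_⟩
    show e (S (T jj)) istar = τ (T jj)
    rw [hτ (T jj), Function.update_of_ne (Ne.symm (histar jj))]
  obtain ⟨g, hgΓ, hgS⟩ := hτQ
  -- the near-unanimity function
  refine ⟨fun u => g (e.symm u), ?_, ?_⟩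
  · intro x0 y i
    have hvU : e.symm (Function.update (fun _ => y) i x0) ∈ Uset := by
      rw [hU]
      refine Finset.mem_filter.mpr ⟨Finset.mem_univ _, ⟨y, i, x0, ?_⟩⟩
      simp
    set t := Siso.symm ⟨_, hvU⟩ with ht
    have hSt : S t = e.symm (Function.update (fun _ => y) i x0) := by
      rw [hS, ht]
      simp
    show g (e.symm (Function.update (fun _ => y) i x0)) = y
    rw [← hSt, hgS t]
    -- τ t = y
    have h1 : e (S t) = Function.update (fun _ => y) i x0 := by
      rw [hSt]; simp
    have h2 := hτ t
    rw [h1] at h2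
    exact (huniq _ _ _ _ _ _ h2.symm)
  · intro ρ hρ α hα
    have hrow : ∀ i : Fin n,
        (fun jj => e (e.symm (fun i' => α i' jj)) i) ∈ ρ.2 := by
      intro i
      have : (fun jj => e (e.symm (fun i' => α i' jj)) i) = α i := by
        funext jj; simp
      rw [this]; exact hα i
    have := Set.mem_iInter.mp hgΓ ⟨⟨ρ, fun jj => e.symm (fun i' => α i' jj)⟩, hρ, hrow⟩
    exact this

theorem nuf_iff_essential_finite (k : ℕ) (hk : 2 ≤ k) (G : Set (Pred k)) :
    (∃ n, 3 ≤ n ∧ HasNUF k G n) ↔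
      { ρ ∈ ppClosure k G | Essential k ρ }.Finite := by
  constructor
  · rintro ⟨n, hn3, f, hf, hfG⟩
    apply Set.Finite.subset (finite_bounded_arity k n)
    rintro ⟨m, P⟩ ⟨hpp, hess⟩
    simp only [Set.mem_setOf_eq]
    by_contra hmn
    push_neg at hmn
    cases m with
    | zero => omega
    | succ m' =>
      exact bp_not_essential hn3 hmn f hf P
        (preserves_pp (by omega) f hfG _ hpp) hess
  · intro hfin
    refine ⟨hfin.toFinset.sup (fun ρ => ρ.1) + 3, by omega,
      nuf_of_bound (by omega) G ?_⟩
    intro ρ hpp hess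
    have hmem : ρ ∈ hfin.toFinset := hfin.mem_toFinset.mpr ⟨hpp, hess⟩
    have h2 : ρ.1 ≤ hfin.toFinset.sup (fun ρ : Pred k => ρ.1) :=
      Finset.le_sup hmem
    omega
end

section
/- Let k ≥ 2, let G ⊆ R_k, let ρ ∈ R̃_k be an essential predicate of arity n with n > 2^(2k²)+2, and suppose there are predicates ρ_1,…,ρ_n ∈ [G] (ρ_1 and ρ_n binary, ρ_2,…,ρ_{n−1} ternary) with ρ(x_1,…,x_n) = ∃y_1∃y_2…∃y_{n−1} ρ_1(x_1,y_1) ∧ ρ_2(y_1,x_2,y_2) ∧ ρ_3(y_2,x_3,y_3) ∧ … ∧ ρ_{n−1}(y_{n−2},x_{n−1},y_{n−1}) ∧ ρ_n(y_{n−1},x_n). Then the set [G] ∩ R̃_k of essential predicates in [G] is infinite. -/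
/-! ### Section 1: flexible pp-closure -/

/-- Flexible version of `ppClosure` with arbitrary finite index types. -/
def ppFlex (k : ℕ) (S : Set (Pred k)) : Set (Pred k) :=
  { ρ | ∃ (J : Type) (_ : Fintype J) (I : Type) (_ : Fintype I)
      (σ : I → Pred k) (z : (i : I) → Fin (σ i).1 → Fin ρ.1 ⊕ J),
      (∀ i, σ i ∈ S ∪ {eqPred k, falsePred k}) ∧
      ∀ x : Tuple k ρ.1, x ∈ ρ.2 ↔
        ∃ y : J → Fin k, ∀ i, (fun j => Sum.elim x y (z i j)) ∈ (σ i).2 }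

lemma append_eq_elim {k n l : ℕ} (x : Tuple k n) (y : Tuple k l) (q : Fin (n + l)) :
    Fin.append x y q = Sum.elim x y (finSumFinEquiv.symm q) := by
  obtain ⟨p, rfl⟩ := finSumFinEquiv.surjective q
  rcases p with a | b
  · simp [finSumFinEquiv_apply_left, Fin.append_left]
  · simp [finSumFinEquiv_apply_right, Fin.append_right]

lemma ppFlex_eq (k : ℕ) (S : Set (Pred k)) : ppFlex k S = ppClosure k S := by
  ext ρ
  constructor
  · rintro ⟨J, _, I, _, σ, z, hσ, hiff⟩
    refine ⟨Fintype.card J, Fintype.card I, σ ∘ (Fintype.equivFin I).symm,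
      fun i j => finSumFinEquiv (Sum.map id (Fintype.equivFin J) (z ((Fintype.equivFin I).symm i) j)),
      fun i => hσ _, ?_⟩
    intro x
    rw [hiff x]
    have he : ∀ (y : J → Fin k) (i0 : I),
        (fun j => Fin.append x (y ∘ (Fintype.equivFin J).symm)
            (finSumFinEquiv (Sum.map id (Fintype.equivFin J) (z i0 j))))
          = fun j => Sum.elim x y (z i0 j) := by
      intro y i0
      funext j
      rw [append_eq_elim]
      rcases z i0 j with a | b <;> simp
    have he2 : ∀ (y : Tuple k (Fintype.card J)) (i0 : I),
        (fun j => Sum.elim x (y ∘ (Fintype.equivFin J)) (z i0 j))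
          = fun j => Fin.append x y
            (finSumFinEquiv (Sum.map id (Fintype.equivFin J) (z i0 j))) := by
      intro y i0
      funext j
      rw [append_eq_elim]
      rcases z i0 j with a | b <;> simp
    constructor
    · rintro ⟨y, hy⟩
      refine ⟨y ∘ (Fintype.equivFin J).symm, fun i => ?_⟩
      dsimp only [Function.comp_apply]
      rw [he]
      exact hy _
    · rintro ⟨y, hy⟩
      refine ⟨y ∘ (Fintype.equivFin J), fun i0 => ?_⟩
      obtain ⟨i, rfl⟩ : ∃ i', (Fintype.equivFin I).symm i' = i0 :=
        ⟨_, Equiv.symm_apply_apply _ i0⟩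
      rw [he2]
      exact hy i
  · rintro ⟨l, s, σ, z, hσ, hiff⟩
    refine ⟨Fin l, inferInstance, Fin s, inferInstance, σ,
      fun i j => finSumFinEquiv.symm (z i j), hσ, ?_⟩
    intro x
    rw [hiff x]
    refine exists_congr fun y => forall_congr' fun i => ?_
    have : (fun j => Sum.elim x y (finSumFinEquiv.symm (z i j)))
        = fun j => Fin.append x y (z i j) := by
      funext j; rw [append_eq_elim]
    rw [this]

lemma base_mem_ppFlex {k : ℕ} {T : Set (Pred k)} {σ : Pred k}
    (h : σ ∈ T ∪ {eqPred k, falsePred k}) : σ ∈ ppFlex k T := by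
  refine ⟨Empty, inferInstance, Unit, inferInstance, fun _ => σ,
    fun _ j => Sum.inl j, fun _ => h, fun x => ?_⟩
  constructor
  · intro hx; exact ⟨Empty.elim, fun _ => hx⟩
  · rintro ⟨y, hy⟩; exact hy ()

lemma ppFlex_trans {k : ℕ} {S T : Set (Pred k)}
    (h : ∀ σ ∈ S, σ ∈ ppFlex k T) : ∀ ρ ∈ ppFlex k S, ρ ∈ ppFlex k T := by
  rintro ρ ⟨J, _, I, _, σ, z, hσ, hiff⟩
  have hh : ∀ i, σ i ∈ ppFlex k T := by
    intro i
    rcases hσ i with hi | hi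
    · exact h _ hi
    · exact base_mem_ppFlex (Or.inr hi)
  simp only [ppFlex, Set.mem_setOf_eq] at hh
  choose J' fJ' I' fI' τ w hτ hiffσ using hh
  haveI := fun i => fJ' i
  haveI := fun i => fI' i
  refine ⟨J ⊕ (Σ i : I, J' i), inferInstance, Σ i : I, I' i, inferInstance,
    fun ip => τ ip.1 ip.2,
    fun ip q => Sum.elim (fun a => Sum.map id Sum.inl (z ip.1 a))
      (fun b => Sum.inr (Sum.inr ⟨ip.1, b⟩)) (w ip.1 ip.2 q),
    fun ip => hτ ip.1 ip.2, ?_⟩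
  intro x
  rw [hiff x]
  constructor
  · rintro ⟨y, hy⟩
    have : ∀ i, ∃ v : J' i → Fin k, ∀ p,
        (fun q => Sum.elim (fun j => Sum.elim x y (z i j)) v (w i p q)) ∈ (τ i p).2 := by
      intro i
      exact ((hiffσ i _).1 (hy i))
    choose V hV using this
    refine ⟨Sum.elim y (fun b => V b.1 b.2), fun ip => ?_⟩
    convert hV ip.1 ip.2 using 1
    funext q
    rcases hw : w ip.1 ip.2 q with a | b
    · rcases hz : z ip.1 a with xv | jv <;> simp [hw, hz]
    · simp [hw]
  · rintro ⟨Y, hY⟩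
    refine ⟨fun j => Y (Sum.inl j), fun i => ?_⟩
    rw [hiffσ i]
    refine ⟨fun b => Y (Sum.inr ⟨i, b⟩), fun p => ?_⟩
    convert hY ⟨i, p⟩ using 1
    funext q
    rcases hw : w i p q with a | b
    · rcases hz : z i a with xv | jv <;> simp [hw, hz]
    · simp [hw]

def chainSig {k : ℕ} (m : ℕ) (fst lst : Set (Tuple k 2)) (mid : Fin m → Set (Tuple k 3)) :
    Unit ⊕ Fin m ⊕ Unit → Pred k
  | Sum.inl _ => ⟨2, fst⟩
  | Sum.inr (Sum.inl i) => ⟨3, mid i⟩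
  | Sum.inr (Sum.inr _) => ⟨2, lst⟩

def chainZ {k : ℕ} (m : ℕ) (fst lst : Set (Tuple k 2)) (mid : Fin m → Set (Tuple k 3)) :
    (i : Unit ⊕ Fin m ⊕ Unit) → Fin (chainSig m fst lst mid i).1 → Fin (m + 2) ⊕ Fin (m + 1)
  | Sum.inl _ => ![Sum.inl 0, Sum.inr 0]
  | Sum.inr (Sum.inl i) => ![Sum.inr i.castSucc, Sum.inl i.succ.castSucc, Sum.inr i.succ]
  | Sum.inr (Sum.inr _) => ![Sum.inr (Fin.last m), Sum.inl (Fin.last (m + 1))]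

lemma chainPred_mem_ppFlex {k m : ℕ} {fst lst : Set (Tuple k 2)}
    {mid : Fin m → Set (Tuple k 3)} (S : Set (Pred k))
    (hf : (⟨2, fst⟩ : Pred k) ∈ S) (hl : (⟨2, lst⟩ : Pred k) ∈ S)
    (hm : ∀ i, (⟨3, mid i⟩ : Pred k) ∈ S) :
    chainPred k m fst lst mid ∈ ppFlex k S := by
  refine ⟨Fin (m + 1), inferInstance, Unit ⊕ Fin m ⊕ Unit, inferInstance,
    chainSig m fst lst mid, chainZ m fst lst mid, ?_, ?_⟩
  · rintro (_ | (i | _))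
    · exact Or.inl hf
    · exact Or.inl (hm i)
    · exact Or.inl hl
  · intro x
    show (∃ y : Tuple k (m+1), _) ↔ _
    constructor
    · rintro ⟨y, h1, h2, h3⟩
      refine ⟨y, ?_⟩
      rintro (_ | (i | _))
      · show _ ∈ fst; exact Eq.mpr (congrArg (· ∈ fst) (funext fun j => by fin_cases j <;> rfl)) (h1)
      · show _ ∈ mid i; exact Eq.mpr (congrArg (· ∈ mid i) (funext fun j => by fin_cases j <;> rfl)) (h2 i)
      · show _ ∈ lst; exact Eq.mpr (congrArg (· ∈ lst) (funext fun j => by fin_cases j <;> rfl)) (h3)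
    · rintro ⟨y, hy⟩
      refine ⟨y, ?_, fun i => ?_, ?_⟩
      · exact Eq.mp (congrArg (· ∈ fst) (funext fun j => by fin_cases j <;> rfl)) (show _ ∈ fst from hy (Sum.inl ()))
      · exact Eq.mp (congrArg (· ∈ mid i) (funext fun j => by fin_cases j <;> rfl)) (show _ ∈ mid i from hy (Sum.inr (Sum.inl i)))
      · exact Eq.mp (congrArg (· ∈ lst) (funext fun j => by fin_cases j <;> rfl)) (show _ ∈ lst from hy (Sum.inr (Sum.inr ())))

lemma chainPred_mem_ppClosure {k m : ℕ} {G : Set (Pred k)} {fst lst : Set (Tuple k 2)}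
    {mid : Fin m → Set (Tuple k 3)}
    (h1 : (⟨2, fst⟩ : Pred k) ∈ ppClosure k G)
    (h2 : (⟨2, lst⟩ : Pred k) ∈ ppClosure k G)
    (h3 : ∀ i, (⟨3, mid i⟩ : Pred k) ∈ ppClosure k G) :
    chainPred k m fst lst mid ∈ ppClosure k G := by
  rw [← ppFlex_eq] at *
  exact ppFlex_trans (fun σ hσ => hσ) _
    (chainPred_mem_ppFlex (ppFlex k G) h1 h2 h3)
/-! ### Section 2: chains as lists of binary relations -/

abbrev Rel2 (k : ℕ) := Fin k → Fin k → Prop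

def comps {k : ℕ} : List (Rel2 k) → Rel2 k
  | [] => Eq
  | r :: L => fun a c => ∃ b, r a b ∧ comps L b c

lemma comps_append {k : ℕ} (L L' : List (Rel2 k)) (a c : Fin k) :
    comps (L ++ L') a c ↔ ∃ b, comps L a b ∧ comps L' b c := by
  induction L generalizing a with
  | nil =>
    simp only [List.nil_append, comps]
    constructor
    · intro h; exact ⟨a, rfl, h⟩
    · rintro ⟨b, rfl, h⟩; exact h
  | cons r L ih =>
    simp only [List.cons_append, comps]
    constructor
    · rintro ⟨b, hr, h⟩
      obtain ⟨b2, h1, h2⟩ := (ih b).1 h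
      exact ⟨b2, ⟨b, hr, h1⟩, h2⟩
    · rintro ⟨b2, ⟨b, hr, h1⟩, h2⟩
      exact ⟨b, hr, (ih b).2 ⟨b2, h1, h2⟩⟩

lemma comps_ofFn_iff {k n : ℕ} (f : Fin n → Rel2 k) (a b : Fin k) :
    comps (List.ofFn f) a b ↔ ∃ y : Fin (n + 1) → Fin k, y 0 = a ∧ y (Fin.last n) = b ∧
      ∀ i : Fin n, f i (y i.castSucc) (y i.succ) := by
  induction n generalizing a with
  | zero =>
    simp only [List.ofFn_zero, comps]
    constructor
    · rintro rfl; exact ⟨fun _ => a, rfl, rfl, fun i => i.elim0⟩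
    · rintro ⟨y, rfl, rfl, -⟩; rfl
  | succ n ih =>
    rw [List.ofFn_succ]
    show (∃ c, f 0 a c ∧ comps (List.ofFn fun i => f i.succ) c b) ↔ _
    constructor
    · rintro ⟨c, hf, h⟩
      obtain ⟨y, hy0, hyl, hy⟩ := (ih _ c).1 h
      refine ⟨Fin.cons a y, Fin.cons_zero _ _, ?_, ?_⟩
      · rw [← Fin.succ_last, Fin.cons_succ]; exact hyl
      · intro i
        refine Fin.cases ?_ (fun q => ?_) i
        · simpa [Fin.cons_succ, hy0] using hf
        · have h1 : (Fin.cons a y : Fin (n+2) → Fin k) q.succ.castSucc = y q.castSucc := by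
            rw [← Fin.succ_castSucc, Fin.cons_succ]
          have h2 : (Fin.cons a y : Fin (n+2) → Fin k) q.succ.succ = y q.succ := by
            rw [Fin.cons_succ]
          rw [h1, h2]
          exact hy q
    · rintro ⟨y, hy0, hyl, hy⟩
      refine ⟨y (0 : Fin (n+1)).succ, ?_, ?_⟩
      · have := hy 0
        rwa [Fin.castSucc_zero, hy0] at this
      · refine (ih _ _).2 ⟨fun q => y q.succ, rfl, ?_, ?_⟩
        · show y (Fin.last n).succ = b
          rw [Fin.succ_last]; exact hyl
        · intro q
          have := hy q.succ
          rwa [← Fin.succ_castSucc] at this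

/-- A piece of a chain: a ternary relation together with the value plugged
into its middle coordinate. -/
abbrev Piece (k : ℕ) := Set (Tuple k 3) × Fin k

def relE {k : ℕ} (e : Piece k) : Rel2 k := fun a b => ![a, e.2, b] ∈ e.1

def chainSat {k : ℕ} (fstS lstS : Set (Tuple k 2)) (P : List (Piece k)) (d e : Fin k) : Prop :=
  ∃ a b, ![d, a] ∈ fstS ∧ comps (P.map relE) a b ∧ ![b, e] ∈ lstS

lemma mem_chainPred_iff {k m : ℕ} (fst lst : Set (Tuple k 2)) (mid : Fin m → Set (Tuple k 3))
    (x : Tuple k (m + 2)) :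
    x ∈ (chainPred k m fst lst mid).2 ↔
      chainSat fst lst (List.ofFn fun q : Fin m => (mid q, x q.succ.castSucc))
        (x 0) (x (Fin.last (m + 1))) := by
  show (∃ y : Tuple k (m+1), _) ↔ _
  unfold chainSat
  rw [List.map_ofFn]
  constructor
  · rintro ⟨y, h1, h2, h3⟩
    refine ⟨y 0, y (Fin.last m), h1, ?_, h3⟩
    exact (comps_ofFn_iff _ _ _).2 ⟨y, rfl, rfl, fun i => h2 i⟩
  · rintro ⟨a, b, h1, h2, h3⟩
    obtain ⟨y, hy0, hyl, hy⟩ := (comps_ofFn_iff _ _ _).1 h2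
    exact ⟨y, by rwa [hy0], fun i => hy i, by rwa [hyl]⟩

/-! ### Section 3: essentiality via witnesses -/

lemma essential_witness {k n : ℕ} {R : Set (Tuple k (n + 1))}
    (h : Essential k ⟨n + 1, R⟩) :
    ∃ x : Tuple k (n + 1), x ∉ R ∧
      ∀ j : Fin (n + 1), ∃ β ∈ R, ∀ t, t ≠ j → β t = x t := by
  by_contra hc
  push_neg at hc
  refine h ⟨n + 1, fun j => ⟨n, {u | ∃ β ∈ R, ∀ t : Fin n, β (j.succAbove t) = u t}⟩,
    fun j t => j.succAbove t, fun j => Nat.lt_succ_self n,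
    fun j => Fin.succAbove_right_injective, fun x => ?_⟩
  constructor
  · intro hx j
    exact ⟨x, hx, fun t => rfl⟩
  · intro hx
    by_contra hxR
    obtain ⟨j, hj⟩ := hc x hxR
    obtain ⟨β, hβ, hβx⟩ := hx j
    obtain ⟨t, htj, hne⟩ := hj β hβ
    obtain ⟨t', rfl⟩ := Fin.exists_succAbove_eq htj
    exact hne (hβx t')

lemma essential_of_witness {k n : ℕ} {R : Set (Tuple k n)}
    (x : Tuple k n) (hx : x ∉ R)
    (hext : ∀ j : Fin n, ∃ β ∈ R, ∀ t, t ≠ j → β t = x t) :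
    Essential k ⟨n, R⟩ := by
  rintro ⟨s, σ, z, hσ, hinj, hiff⟩
  have hxm : ¬ ∀ i, (fun j => x (z i j)) ∈ (σ i).2 := fun h => hx ((hiff x).2 h)
  push_neg at hxm
  obtain ⟨i, hi⟩ := hxm
  have hns : ¬ Function.Surjective (z i) := by
    intro hs
    have hcard := Fintype.card_le_of_surjective _ hs
    simp only [Fintype.card_fin] at hcard
    have h2 := hσ i
    simp only [Set.mem_setOf_eq] at h2
    omega
  rw [Function.Surjective] at hns
  push_neg at hns
  obtain ⟨j, hj⟩ := hns
  obtain ⟨β, hβR, hβ⟩ := hext j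
  have hm : (fun q => β (z i q)) ∈ (σ i).2 := (hiff β).1 hβR i
  have heq : (fun q => β (z i q)) = fun q => x (z i q) :=
    funext fun q => hβ _ (hj q)
  rw [heq] at hm
  exact hi hm
/-! ### Section 4: prefix/suffix profiles and pumping -/

def preS {k : ℕ} (fstS : Set (Tuple k 2)) (d : Fin k) (P : List (Piece k)) : Set (Fin k) :=
  {c | ∃ a, ![d, a] ∈ fstS ∧ comps (P.map relE) a c}

def sufS {k : ℕ} (lstS : Set (Tuple k 2)) (e : Fin k) (P : List (Piece k)) : Set (Fin k) :=
  {c | ∃ b, comps (P.map relE) c b ∧ ![b, e] ∈ lstS}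

lemma chainSat_iff_cut {k : ℕ} (fstS lstS : Set (Tuple k 2)) (P Q : List (Piece k))
    (d e : Fin k) :
    chainSat fstS lstS (P ++ Q) d e ↔ ∃ c, c ∈ preS fstS d P ∧ c ∈ sufS lstS e Q := by
  unfold chainSat preS sufS
  rw [List.map_append]
  constructor
  · rintro ⟨a, b, h1, h2, h3⟩
    obtain ⟨c, hc1, hc2⟩ := (comps_append _ _ _ _).1 h2
    exact ⟨c, ⟨a, h1, hc1⟩, ⟨b, hc2, h3⟩⟩
  · rintro ⟨c, ⟨a, h1, hc1⟩, ⟨b, hc2, h3⟩⟩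
    exact ⟨a, b, h1, (comps_append _ _ _ _).2 ⟨c, hc1, hc2⟩, h3⟩

lemma preS_append {k : ℕ} (fstS : Set (Tuple k 2)) (d : Fin k) (P Q : List (Piece k)) :
    preS fstS d (P ++ Q) = {c | ∃ a ∈ preS fstS d P, comps (Q.map relE) a c} := by
  ext c
  unfold preS
  simp only [Set.mem_setOf_eq, List.map_append]
  constructor
  · rintro ⟨a, h1, h2⟩
    obtain ⟨b, hb1, hb2⟩ := (comps_append _ _ _ _).1 h2
    exact ⟨b, ⟨a, h1, hb1⟩, hb2⟩
  · rintro ⟨b, ⟨a, h1, hb1⟩, hb2⟩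
    exact ⟨a, h1, (comps_append _ _ _ _).2 ⟨b, hb1, hb2⟩⟩

lemma sufS_append {k : ℕ} (lstS : Set (Tuple k 2)) (e : Fin k) (P Q : List (Piece k)) :
    sufS lstS e (P ++ Q) = {c | ∃ b, comps (P.map relE) c b ∧ b ∈ sufS lstS e Q} := by
  ext c
  unfold sufS
  simp only [Set.mem_setOf_eq, List.map_append]
  constructor
  · rintro ⟨b, h1, h2⟩
    obtain ⟨w, hw1, hw2⟩ := (comps_append _ _ _ _).1 h1
    exact ⟨w, hw1, ⟨b, hw2, h2⟩⟩
  · rintro ⟨w, hw1, b, hw2, h2⟩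
    exact ⟨b, (comps_append _ _ _ _).2 ⟨w, hw1, hw2⟩, h2⟩

/-- `t` concatenated copies of a list. -/
def rep {α : Type*} : ℕ → List α → List α
  | 0, _ => []
  | n + 1, Q => Q ++ rep n Q

lemma rep_succ_back {α : Type*} (n : ℕ) (Q : List α) :
    rep (n + 1) Q = rep n Q ++ Q := by
  induction n with
  | zero => simp [rep]
  | succ n ih =>
    show Q ++ rep (n + 1) Q = (Q ++ rep n Q) ++ Q
    rw [ih, List.append_assoc]

lemma rep_length {α : Type*} (n : ℕ) (Q : List α) :
    (rep n Q).length = n * Q.length := by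
  induction n with
  | zero => simp [rep]
  | succ n ih => simp [rep, ih]; ring

lemma rep_add {α : Type*} (a b : ℕ) (Q : List α) :
    rep (a + b) Q = rep a Q ++ rep b Q := by
  induction b with
  | zero => simp [rep]
  | succ b ih =>
    rw [show a + (b+1) = (a+b) + 1 from rfl, rep_succ_back, ih, rep_succ_back,
      List.append_assoc]

lemma rep_mem {α : Type*} {n : ℕ} {Q : List α} {x : α} (h : x ∈ rep n Q) : x ∈ Q := by
  induction n with
  | zero => simp [rep] at h
  | succ n ih =>
    rcases List.mem_append.1 h with h | h
    · exact h
    · exact ih h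

lemma rep_getElem {α : Type*} (n : ℕ) (Q : List α) (c₀ r : ℕ) (hr : r < Q.length)
    (hc : c₀ < n) (hlt : c₀ * Q.length + r < (rep n Q).length) :
    (rep n Q)[c₀ * Q.length + r] = Q[r] := by
  induction n generalizing c₀ with
  | zero => omega
  | succ n ih =>
    have hlt' : c₀ * Q.length + r < (Q ++ rep n Q).length := hlt
    show (Q ++ rep n Q)[c₀ * Q.length + r]'hlt' = Q[r]
    rcases Nat.eq_zero_or_pos c₀ with rfl | hpos
    · rw [List.getElem_append]
      simp only [Nat.zero_mul, Nat.zero_add]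
      rw [dif_pos hr]
    · have hle : Q.length ≤ c₀ * Q.length := Nat.le_mul_of_pos_left _ hpos
      have key : (c₀ - 1) * Q.length + Q.length = c₀ * Q.length := by
        rw [Nat.sub_one_mul]; omega
      have h1 : ¬ (c₀ * Q.length + r < Q.length) := by omega
      rw [List.getElem_append, dif_neg h1]
      have h2 : c₀ * Q.length + r - Q.length = (c₀ - 1) * Q.length + r := by omega
      have hnl : (n + 1) * Q.length = n * Q.length + Q.length := by ring
      have h3 : (c₀-1) * Q.length + r < (rep n Q).length := by
        rw [rep_length] at hlt ⊢
        omega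
      rw [show (rep n Q)[c₀ * Q.length + r - Q.length]'_ =
        (rep n Q)[(c₀-1) * Q.length + r]'h3 from by congr 1]
      exact ih (c₀ - 1) (by omega) h3

section Pump

variable {k : ℕ} (fstS lstS : Set (Tuple k 2)) (d e : Fin k)
variable (P₁ P₂ P₃ : List (Piece k))

lemma iterP (hp : preS fstS d (P₁ ++ P₂) = preS fstS d P₁) (t : ℕ) :
    ∀ c ∈ preS fstS d P₁, c ∈ preS fstS d (P₁ ++ rep t P₂) := by
  induction t with
  | zero => intro c hc; simpa [rep] using hc
  | succ t ih =>
    intro c hc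
    rw [← hp, preS_append] at hc
    obtain ⟨a, ha, hcomp⟩ := hc
    have := ih a ha
    rw [rep_succ_back, ← List.append_assoc, preS_append]
    exact ⟨a, this, hcomp⟩

lemma iterS (hs : sufS lstS e (P₂ ++ P₃) = sufS lstS e P₃) (t : ℕ) :
    ∀ c ∈ sufS lstS e P₃, c ∈ sufS lstS e (rep t P₂ ++ P₃) := by
  induction t with
  | zero => intro c hc; simpa [rep] using hc
  | succ t ih =>
    intro c hc
    rw [← hs, sufS_append] at hc
    obtain ⟨b, hcomp, hb⟩ := hc
    have := ih b hb
    show c ∈ sufS lstS e ((P₂ ++ rep t P₂) ++ P₃)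
    rw [List.append_assoc, sufS_append]
    exact ⟨b, hcomp, this⟩

lemma preRep (hp : preS fstS d (P₁ ++ P₂) = preS fstS d P₁) (t : ℕ) :
    preS fstS d (P₁ ++ rep (t + 1) P₂) = preS fstS d P₁ := by
  induction t with
  | zero =>
    show preS fstS d (P₁ ++ (P₂ ++ [])) = _
    rw [List.append_nil]; exact hp
  | succ t ih =>
    rw [rep_succ_back, ← List.append_assoc, preS_append, ih, ← preS_append, hp]

/-- Pumping a chain that has a modified prefix. -/
lemma pump_pre (hs : sufS lstS e (P₂ ++ P₃) = sufS lstS e P₃)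
    (t : ℕ) (d' : Fin k) (Q₁ : List (Piece k))
    (h : chainSat fstS lstS (Q₁ ++ (P₂ ++ P₃)) d' e) :
    chainSat fstS lstS (Q₁ ++ (rep (t + 1) P₂ ++ P₃)) d' e := by
  obtain ⟨c, hc1, hc2⟩ := (chainSat_iff_cut _ _ _ _ _ _).1 h
  rw [hs] at hc2
  exact (chainSat_iff_cut _ _ _ _ _ _).2 ⟨c, hc1, iterS lstS e P₂ P₃ hs (t+1) c hc2⟩

/-- Pumping a chain that has a modified suffix. -/
lemma pump_suf (hp : preS fstS d (P₁ ++ P₂) = preS fstS d P₁)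
    (t : ℕ) (e' : Fin k) (Q₃ : List (Piece k))
    (h : chainSat fstS lstS ((P₁ ++ P₂) ++ Q₃) d e') :
    chainSat fstS lstS ((P₁ ++ rep (t + 1) P₂) ++ Q₃) d e' := by
  obtain ⟨c, hc1, hc2⟩ := (chainSat_iff_cut _ _ _ _ _ _).1 h
  rw [hp] at hc1
  exact (chainSat_iff_cut _ _ _ _ _ _).2
    ⟨c, iterP fstS d P₁ P₂ hp (t+1) c hc1, hc2⟩

/-- Pumping a chain that has a modified piece inside the pumped segment. -/
lemma pump_mid (hp : preS fstS d (P₁ ++ P₂) = preS fstS d P₁)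
    (hs : sufS lstS e (P₂ ++ P₃) = sufS lstS e P₃)
    (c₀ t : ℕ) (hc₀ : c₀ ≤ t) (Q₂ : List (Piece k))
    (h : chainSat fstS lstS (P₁ ++ (Q₂ ++ P₃)) d e) :
    chainSat fstS lstS ((P₁ ++ rep c₀ P₂) ++ (Q₂ ++ (rep (t - c₀) P₂ ++ P₃))) d e := by
  obtain ⟨c, hc1, hc2⟩ := (chainSat_iff_cut _ _ _ _ _ _).1 h
  rw [sufS_append] at hc2
  obtain ⟨b, hcomp, hb⟩ := hc2
  refine (chainSat_iff_cut _ _ _ _ _ _).2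
    ⟨c, iterP fstS d P₁ P₂ hp c₀ c hc1, ?_⟩
  rw [sufS_append]
  exact ⟨b, hcomp, iterS lstS e P₂ P₃ hs (t - c₀) b hb⟩

/-- The pumped chain is still unsatisfied at the witness values. -/
lemma pump_not (hp : preS fstS d (P₁ ++ P₂) = preS fstS d P₁)
    (hnot : ¬ chainSat fstS lstS (P₁ ++ (P₂ ++ P₃)) d e) (t : ℕ) :
    ¬ chainSat fstS lstS ((P₁ ++ rep (t + 1) P₂) ++ P₃) d e := by
  intro h
  obtain ⟨c, hc1, hc2⟩ := (chainSat_iff_cut _ _ _ _ _ _).1 h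
  rw [preRep fstS d P₁ P₂ hp t, ← hp] at hc1
  apply hnot
  rw [← List.append_assoc]
  exact (chainSat_iff_cut _ _ _ _ _ _).2 ⟨c, hc1, hc2⟩

end Pump
/-! ### Section 5a: helpers for coordinates of a chain predicate -/

lemma fin_msc_ne_zero {n : ℕ} (q : Fin n) : q.succ.castSucc ≠ (0 : Fin (n + 2)) := by
  intro h
  have h' := congrArg Fin.val h
  simp only [Fin.coe_castSucc, Fin.val_succ, Fin.val_zero] at h'
  omega

lemma fin_msc_ne_last {n : ℕ} (q : Fin n) : q.succ.castSucc ≠ Fin.last (n + 1) := by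
  intro h
  have h' := congrArg Fin.val h
  simp only [Fin.coe_castSucc, Fin.val_succ, Fin.val_last] at h'
  omega

lemma fin_last_ne_zero {n : ℕ} : Fin.last (n + 1) ≠ (0 : Fin (n + 2)) := by
  intro h
  have h' := congrArg Fin.val h
  simp only [Fin.val_last, Fin.val_zero] at h'
  omega

lemma fin_msc_inj {n : ℕ} {q q' : Fin n} (h : (q.succ.castSucc : Fin (n + 2)) = q'.succ.castSucc) :
    q = q' := by
  have h' := congrArg Fin.val h
  simp only [Fin.coe_castSucc, Fin.val_succ] at h'
  exact Fin.ext (by omega)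

lemma fin_cases3 {n : ℕ} (j : Fin (n + 2)) :
    j = 0 ∨ j = Fin.last (n + 1) ∨ ∃ q : Fin n, j = q.succ.castSucc := by
  rcases j with ⟨v, hv⟩
  rcases Nat.eq_zero_or_pos v with rfl | hpos
  · left; rfl
  rcases eq_or_lt_of_le (Nat.le_of_lt_succ hv) with heq | hlt
  · right; left
    apply Fin.ext
    simp only [Fin.val_last]
    omega
  · right; right
    refine ⟨⟨v - 1, by omega⟩, Fin.ext ?_⟩
    show v = v - 1 + 1
    omega

/-- The canonical tuple of a chain. -/
def xTup {k : ℕ} (P : List (Piece k)) (d e : Fin k) : Tuple k (P.length + 2) :=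
  Fin.cons d (Fin.snoc (fun q : Fin P.length => (P.get q).2) e)

@[simp] lemma xTup_zero {k : ℕ} (P : List (Piece k)) (d e : Fin k) :
    xTup P d e 0 = d := rfl

@[simp] lemma xTup_last {k : ℕ} (P : List (Piece k)) (d e : Fin k) :
    xTup P d e (Fin.last (P.length + 1)) = e := by
  rw [xTup, ← Fin.succ_last, Fin.cons_succ, Fin.snoc_last]

@[simp] lemma xTup_mid {k : ℕ} (P : List (Piece k)) (d e : Fin k) (q : Fin P.length) :
    xTup P d e q.succ.castSucc = (P.get q).2 := by
  rw [xTup, ← Fin.succ_castSucc, Fin.cons_succ, Fin.snoc_castSucc]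

lemma ofFn_fst_snd {α β : Type*} (P : List (α × β)) :
    (List.ofFn fun q : Fin P.length => ((P.get q).1, (P.get q).2)) = P := by
  conv_rhs => rw [← List.ofFn_get P]

/-! ### Section 5b: witness extraction for a chain predicate -/

lemma chain_witness {k m : ℕ} (fst lst : Set (Tuple k 2)) (mid : Fin m → Set (Tuple k 3))
    (hess : Essential k (chainPred k m fst lst mid)) :
    ∃ (d e : Fin k) (v : Fin m → Fin k),
      ¬ chainSat fst lst (List.ofFn fun q => (mid q, v q)) d e ∧
      (∃ d', chainSat fst lst (List.ofFn fun q => (mid q, v q)) d' e) ∧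
      (∃ e', chainSat fst lst (List.ofFn fun q => (mid q, v q)) d e') ∧
      ∀ q : Fin m, ∃ c,
        chainSat fst lst ((List.ofFn fun q => (mid q, v q)).set (q : ℕ) (mid q, c)) d e := by
  obtain ⟨x, hxnot, hxext⟩ :=
    essential_witness (k := k) (n := m + 1) (R := (chainPred k m fst lst mid).2) hess
  refine ⟨x 0, x (Fin.last (m + 1)), fun q => x q.succ.castSucc, ?_, ?_, ?_, ?_⟩
  · intro h
    exact hxnot ((mem_chainPred_iff fst lst mid x).2 h)
  · obtain ⟨β, hβmem, hβ⟩ := hxext 0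
    replace hβmem := (mem_chainPred_iff fst lst mid β).1 hβmem
    have h0 : (List.ofFn fun q : Fin m => (mid q, β q.succ.castSucc))
        = List.ofFn fun q => (mid q, x q.succ.castSucc) :=
      congrArg List.ofFn (funext fun q => by rw [hβ _ (fin_msc_ne_zero q)])
    have hlast : β (Fin.last (m + 1)) = x (Fin.last (m + 1)) := hβ _ fin_last_ne_zero
    exact ⟨β 0, by rwa [h0, hlast] at hβmem⟩
  · obtain ⟨β, hβmem, hβ⟩ := hxext (Fin.last (m + 1))
    replace hβmem := (mem_chainPred_iff fst lst mid β).1 hβmem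
    have h0 : (List.ofFn fun q : Fin m => (mid q, β q.succ.castSucc))
        = List.ofFn fun q => (mid q, x q.succ.castSucc) :=
      congrArg List.ofFn (funext fun q => by rw [hβ _ (fin_msc_ne_last q)])
    have h1 : β 0 = x 0 := hβ _ fin_last_ne_zero.symm
    exact ⟨β (Fin.last (m + 1)), by rwa [h0, h1] at hβmem⟩
  · intro q
    obtain ⟨β, hβmem, hβ⟩ := hxext q.succ.castSucc
    replace hβmem := (mem_chainPred_iff fst lst mid β).1 hβmem
    have h0 : β 0 = x 0 := hβ _ (fin_msc_ne_zero q).symm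
    have h1 : β (Fin.last (m + 1)) = x (Fin.last (m + 1)) := hβ _ (fin_msc_ne_last q).symm
    have h2 : (List.ofFn fun q' : Fin m => (mid q', β q'.succ.castSucc))
        = (List.ofFn fun q' => (mid q', x q'.succ.castSucc)).set (q : ℕ)
            (mid q, β q.succ.castSucc) := by
      refine List.ext_getElem (by simp) ?_
      intro w h₁ h₂
      simp only [List.length_ofFn] at h₁
      rw [List.getElem_ofFn, List.getElem_set, List.getElem_ofFn]
      by_cases hqw : (q : ℕ) = w
      · rw [if_pos hqw]
        have : (⟨w, h₁⟩ : Fin m) = q := Fin.ext hqw.symm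
        rw [this]
      · rw [if_neg hqw]
        have hne : (⟨w, h₁⟩ : Fin m).succ.castSucc ≠ q.succ.castSucc :=
          fun h => hqw (congrArg Fin.val (fin_msc_inj h)).symm
        rw [hβ _ hne]
    exact ⟨β q.succ.castSucc, by rwa [h0, h1, h2] at hβmem⟩

/-! ### Section 5c: essentiality of a chain given list-level witnesses -/

lemma mem_chainList_iff {k : ℕ} (fst lst : Set (Tuple k 2)) (M : List (Piece k))
    (x : Tuple k (M.length + 2)) :
    x ∈ (chainPred k M.length fst lst fun q => (M.get q).1).2 ↔
      chainSat fst lst (List.ofFn fun q : Fin M.length => ((M.get q).1, x q.succ.castSucc))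
        (x 0) (x (Fin.last (M.length + 1))) :=
  mem_chainPred_iff fst lst _ x

lemma chain_essential_of_list {k : ℕ} (fst lst : Set (Tuple k 2)) (M : List (Piece k))
    (d e : Fin k)
    (hnot : ¬ chainSat fst lst M d e)
    (hd : ∃ d', chainSat fst lst M d' e)
    (he : ∃ e', chainSat fst lst M d e')
    (hm : ∀ q : Fin M.length, ∃ c, chainSat fst lst (M.set (q : ℕ) ((M.get q).1, c)) d e) :
    Essential k (chainPred k M.length fst lst fun q => (M.get q).1) := by
  have key : ∀ (dd ee : Fin k),
      (List.ofFn fun q : Fin M.length => ((M.get q).1, xTup M dd ee q.succ.castSucc)) = M := by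
    intro dd ee
    have : (fun q : Fin M.length => ((M.get q).1, xTup M dd ee q.succ.castSucc))
        = fun q => ((M.get q).1, (M.get q).2) := funext fun q => by rw [xTup_mid]
    rw [this, ofFn_fst_snd]
  apply essential_of_witness (x := xTup M d e)
  · intro hmem
    have h := (mem_chainList_iff fst lst M (xTup M d e)).1 hmem
    rw [key, xTup_zero, xTup_last] at h
    exact hnot h
  · intro j
    rcases fin_cases3 j with rfl | rfl | ⟨q, rfl⟩
    · obtain ⟨d', hsat⟩ := hd
      refine ⟨xTup M d' e, ?_, ?_⟩
      · refine (mem_chainList_iff fst lst M (xTup M d' e)).2 ?_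
        rw [key, xTup_zero, xTup_last]
        exact hsat
      · intro t ht
        rcases fin_cases3 t with rfl | rfl | ⟨w, rfl⟩
        · exact absurd rfl ht
        · rw [xTup_last, xTup_last]
        · rw [xTup_mid, xTup_mid]
    · obtain ⟨e', hsat⟩ := he
      refine ⟨xTup M d e', ?_, ?_⟩
      · refine (mem_chainList_iff fst lst M (xTup M d e')).2 ?_
        rw [key, xTup_zero, xTup_last]
        exact hsat
      · intro t ht
        rcases fin_cases3 t with rfl | rfl | ⟨w, rfl⟩
        · rw [xTup_zero, xTup_zero]
        · exact absurd rfl ht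
        · rw [xTup_mid, xTup_mid]
    · obtain ⟨c, hsat⟩ := hm q
      refine ⟨Function.update (xTup M d e) q.succ.castSucc c, ?_, ?_⟩
      · refine (mem_chainList_iff fst lst M _).2 ?_
        rw [Function.update_of_ne (fin_msc_ne_zero q).symm,
          Function.update_of_ne (fin_msc_ne_last q).symm, xTup_zero, xTup_last]
        have hl : (List.ofFn fun q' : Fin M.length =>
            ((M.get q').1, Function.update (xTup M d e) q.succ.castSucc c q'.succ.castSucc))
              = M.set (q : ℕ) ((M.get q).1, c) := by
          refine List.ext_getElem (by simp) ?_
          intro w h₁ h₂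
          simp only [List.length_ofFn] at h₁
          rw [List.getElem_ofFn, List.getElem_set]
          by_cases hqw : (q : ℕ) = w
          · rw [if_pos hqw]
            have hq : (⟨w, h₁⟩ : Fin M.length) = q := Fin.ext hqw.symm
            rw [hq, Function.update_self]
          · rw [if_neg hqw]
            have hne : (⟨w, h₁⟩ : Fin M.length).succ.castSucc ≠ q.succ.castSucc :=
              fun h => hqw (congrArg Fin.val (fin_msc_inj h)).symm
            rw [Function.update_of_ne hne, xTup_mid, List.get_eq_getElem, Prod.mk.eta]
        rw [hl]
        exact hsat
      · intro t ht
        rw [Function.update_of_ne ht]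
/-! ### Section 6: all witnesses survive pumping -/

lemma pumped_all {k : ℕ} (fst lst : Set (Tuple k 2)) (d e : Fin k)
    (P₁ P₂ P₃ : List (Piece k))
    (hLpos : 0 < P₂.length)
    (hp : preS fst d (P₁ ++ P₂) = preS fst d P₁)
    (hs : sufS lst e (P₂ ++ P₃) = sufS lst e P₃)
    (hnot : ¬ chainSat fst lst (P₁ ++ (P₂ ++ P₃)) d e)
    (hd : ∃ d', chainSat fst lst (P₁ ++ (P₂ ++ P₃)) d' e)
    (he : ∃ e', chainSat fst lst (P₁ ++ (P₂ ++ P₃)) d e')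
    (hm : ∀ (w : ℕ) (hw : w < (P₁ ++ (P₂ ++ P₃)).length), ∃ c,
        chainSat fst lst ((P₁ ++ (P₂ ++ P₃)).set w
          ((((P₁ ++ (P₂ ++ P₃))[w]'hw)).1, c)) d e)
    (t : ℕ) :
    (¬ chainSat fst lst ((P₁ ++ rep (t+1) P₂) ++ P₃) d e) ∧
    (∃ d', chainSat fst lst ((P₁ ++ rep (t+1) P₂) ++ P₃) d' e) ∧
    (∃ e', chainSat fst lst ((P₁ ++ rep (t+1) P₂) ++ P₃) d e') ∧
    (∀ (w : ℕ) (hw : w < ((P₁ ++ rep (t+1) P₂) ++ P₃).length), ∃ c,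
        chainSat fst lst (((P₁ ++ rep (t+1) P₂) ++ P₃).set w
          (((((P₁ ++ rep (t+1) P₂) ++ P₃)[w]'hw)).1, c)) d e) := by
  have hmul1 : (t + 1) * P₂.length = t * P₂.length + P₂.length := by ring
  refine ⟨pump_not fst lst d e P₁ P₂ P₃ hp hnot t, ?_, ?_, ?_⟩
  · obtain ⟨d', hd'⟩ := hd
    have h := pump_pre fst lst e P₂ P₃ hs t d' P₁ hd'
    exact ⟨d', by rwa [← List.append_assoc] at h⟩
  · obtain ⟨e', he'⟩ := he
    have h := pump_suf fst lst d P₁ P₂ hp t e' P₃ (by rwa [List.append_assoc])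
    exact ⟨e', h⟩
  · intro w hw
    have hlen : ((P₁ ++ rep (t+1) P₂) ++ P₃).length
        = P₁.length + (t+1) * P₂.length + P₃.length := by
      simp only [List.length_append, rep_length]
    have hAlen : (P₁ ++ (P₂ ++ P₃)).length = P₁.length + P₂.length + P₃.length := by
      simp only [List.length_append]; omega
    by_cases hcase1 : w < P₁.length
    · -- position in the prefix
      obtain ⟨c, hc⟩ := hm w (by omega)
      refine ⟨c, ?_⟩
      have hfst : ((((P₁ ++ rep (t+1) P₂) ++ P₃)[w]'hw)).1
          = (((P₁ ++ (P₂ ++ P₃))[w]'(by omega))).1 := by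
        rw [List.getElem_append,
          dif_pos (show w < (P₁ ++ rep (t+1) P₂).length by
            simp only [List.length_append, rep_length]; omega),
          List.getElem_append, dif_pos hcase1,
          List.getElem_append (l₁ := P₁) (l₂ := P₂ ++ P₃), dif_pos hcase1]
      rw [hfst]
      set el : Piece k := (((P₁ ++ (P₂ ++ P₃))[w]'(by omega)).1, c) with heldef
      have key1 : (P₁ ++ (P₂ ++ P₃)).set w el = (P₁.set w el) ++ (P₂ ++ P₃) := by
        rw [List.set_append, if_pos hcase1]
      rw [key1] at hc
      have h := pump_pre fst lst e P₂ P₃ hs t d (P₁.set w el) hc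
      have key2 : ((P₁ ++ rep (t+1) P₂) ++ P₃).set w el
          = (P₁.set w el) ++ (rep (t+1) P₂ ++ P₃) := by
        rw [List.set_append,
          if_pos (show w < (P₁ ++ rep (t+1) P₂).length by
            simp only [List.length_append, rep_length]; omega),
          List.set_append, if_pos hcase1, List.append_assoc]
      rw [key2]
      exact h
    · by_cases hcase2 : w < P₁.length + (t+1) * P₂.length
      · -- position in one of the pumped copies
        obtain ⟨c₀, r, hr, hwi, hc₀t⟩ :
            ∃ c₀ r, r < P₂.length ∧ w - P₁.length = c₀ * P₂.length + r ∧ c₀ < t + 1 := by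
          refine ⟨(w - P₁.length) / P₂.length, (w - P₁.length) % P₂.length,
            Nat.mod_lt _ hLpos, ?_, Nat.div_lt_of_lt_mul (show _ < P₂.length * (t+1) by
              have hcm := Nat.mul_comm P₂.length (t+1); omega)⟩
          rw [Nat.mul_comm]
          exact (Nat.div_add_mod _ _).symm
        have hmul2 : (t + 1) * P₂.length
            = c₀ * P₂.length + (P₂.length + (t - c₀) * P₂.length) := by
          have h' : t + 1 = c₀ + (1 + (t - c₀)) := by omega
          rw [h']; ring
        obtain ⟨c, hc⟩ := hm (P₁.length + r) (by omega)
        refine ⟨c, ?_⟩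
        have hA : ((P₁ ++ (P₂ ++ P₃))[P₁.length + r]'(by omega)) = P₂[r]'hr := by
          rw [List.getElem_append, dif_neg (by omega),
            List.getElem_append, dif_pos (by omega)]
          congr 1
          omega
        have hfst : ((((P₁ ++ rep (t+1) P₂) ++ P₃)[w]'hw)).1
            = (((P₁ ++ (P₂ ++ P₃))[P₁.length + r]'(by omega))).1 := by
          rw [List.getElem_append,
            dif_pos (show w < (P₁ ++ rep (t+1) P₂).length by
              simp only [List.length_append, rep_length]; omega),
            List.getElem_append, dif_neg hcase1]
          have hb1 : w - P₁.length < (rep (t+1) P₂).length := by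
            rw [rep_length]; omega
          rw [show (rep (t+1) P₂)[w - P₁.length]'hb1
              = (rep (t+1) P₂)[c₀ * P₂.length + r]'(by rw [rep_length]; omega) from by
                congr 1,
            rep_getElem (t+1) P₂ c₀ r hr hc₀t (by rw [rep_length]; omega), hA]
        rw [hfst]
        set el : Piece k := (((P₁ ++ (P₂ ++ P₃))[P₁.length + r]'(by omega)).1, c) with heldef
        have key1 : (P₁ ++ (P₂ ++ P₃)).set (P₁.length + r) el
            = P₁ ++ ((P₂.set r el) ++ P₃) := by
          rw [List.set_append, if_neg (by omega), List.set_append]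
          have hidx : P₁.length + r - P₁.length = r := by omega
          rw [hidx, if_pos hr]
        rw [key1] at hc
        have h := pump_mid fst lst d e P₁ P₂ P₃ hp hs c₀ t (by omega) (P₂.set r el) hc
        have hrepsplit : rep (t+1) P₂ = rep c₀ P₂ ++ (P₂ ++ rep (t - c₀) P₂) := by
          have h1 : t + 1 = c₀ + ((t - c₀) + 1) := by omega
          rw [h1, rep_add]
          rfl
        have key2 : ((P₁ ++ rep (t+1) P₂) ++ P₃).set w el
            = (P₁ ++ rep c₀ P₂) ++ ((P₂.set r el) ++ (rep (t - c₀) P₂ ++ P₃)) := by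
          rw [List.set_append,
            if_pos (show w < (P₁ ++ rep (t+1) P₂).length by
              simp only [List.length_append, rep_length]; omega),
            List.set_append, if_neg hcase1, hrepsplit,
            List.set_append, if_neg (by rw [rep_length]; omega),
            List.set_append, if_pos (show w - P₁.length - (rep c₀ P₂).length < P₂.length by
              rw [rep_length]; omega)]
          have hidx : w - P₁.length - (rep c₀ P₂).length = r := by
            rw [rep_length]; omega
          rw [hidx]
          simp only [List.append_assoc]
        rw [key2]
        exact h
      · -- position in the suffix
        have hq0 : w - t * P₂.length < (P₁ ++ (P₂ ++ P₃)).length := by omega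
        obtain ⟨c, hc⟩ := hm (w - t * P₂.length) hq0
        refine ⟨c, ?_⟩
        have hfst : ((((P₁ ++ rep (t+1) P₂) ++ P₃)[w]'hw)).1
            = (((P₁ ++ (P₂ ++ P₃))[w - t * P₂.length]'hq0)).1 := by
          have hA : ((P₁ ++ (P₂ ++ P₃))[w - t * P₂.length]'hq0)
              = P₃[w - P₁.length - (t+1) * P₂.length]'(by omega) := by
            rw [List.getElem_append, dif_neg (by omega),
              List.getElem_append, dif_neg (by omega)]
            congr 1
            omega
          have hb : w - (P₁ ++ rep (t + 1) P₂).length < P₃.length := by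
            simp only [List.length_append, rep_length]; omega
          have hidx : w - (P₁ ++ rep (t + 1) P₂).length
              = w - P₁.length - (t+1) * P₂.length := by
            simp only [List.length_append, rep_length]; omega
          rw [List.getElem_append,
            dif_neg (show ¬ w < (P₁ ++ rep (t+1) P₂).length by
              simp only [List.length_append, rep_length]; omega), hA,
            show P₃[w - (P₁ ++ rep (t + 1) P₂).length]'hb
              = P₃[w - P₁.length - (t+1) * P₂.length]'(by omega) from by congr 1]
        rw [hfst]
        set el : Piece k := (((P₁ ++ (P₂ ++ P₃))[w - t * P₂.length]'hq0).1, c) with heldef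
        have key1 : (P₁ ++ (P₂ ++ P₃)).set (w - t * P₂.length) el
            = (P₁ ++ P₂) ++ (P₃.set (w - P₁.length - (t+1) * P₂.length) el) := by
          rw [← List.append_assoc, List.set_append,
            if_neg (show ¬ w - t * P₂.length < (P₁ ++ P₂).length by
              simp only [List.length_append]; omega)]
          have hidx : w - t * P₂.length - (P₁ ++ P₂).length
              = w - P₁.length - (t+1) * P₂.length := by
            simp only [List.length_append]; omega
          rw [hidx]
        rw [key1] at hc
        have h := pump_suf fst lst d P₁ P₂ hp t e
          (P₃.set (w - P₁.length - (t+1) * P₂.length) el) hc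
        have key2 : ((P₁ ++ rep (t+1) P₂) ++ P₃).set w el
            = (P₁ ++ rep (t+1) P₂) ++ (P₃.set (w - P₁.length - (t+1) * P₂.length) el) := by
          rw [List.set_append,
            if_neg (show ¬ w < (P₁ ++ rep (t+1) P₂).length by
              simp only [List.length_append, rep_length]; omega)]
          have hidx : w - (P₁ ++ rep (t + 1) P₂).length
              = w - P₁.length - (t+1) * P₂.length := by
            simp only [List.length_append, rep_length]; omega
          rw [hidx]
        rw [key2]
        exact h
/-! ### Section 7: pigeonhole and the master construction -/

lemma master_list {k : ℕ} (fst lst : Set (Tuple k 2)) (d e : Fin k) (P₀ : List (Piece k))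
    (hbig : 2 ^ k * 2 ^ k < P₀.length + 1)
    (hnot : ¬ chainSat fst lst P₀ d e)
    (hd : ∃ d', chainSat fst lst P₀ d' e)
    (he : ∃ e', chainSat fst lst P₀ d e')
    (hm : ∀ (w : ℕ) (hw : w < P₀.length), ∃ c,
        chainSat fst lst (P₀.set w ((P₀[w]'hw).1, c)) d e) :
    ∃ Mf : ℕ → List (Piece k),
      StrictMono (fun t => (Mf t).length) ∧
      ∀ t, (∀ el ∈ Mf t, el ∈ P₀) ∧
        (¬ chainSat fst lst (Mf t) d e) ∧
        (∃ d', chainSat fst lst (Mf t) d' e) ∧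
        (∃ e', chainSat fst lst (Mf t) d e') ∧
        ∀ (w : ℕ) (hw : w < (Mf t).length), ∃ c,
          chainSat fst lst ((Mf t).set w (((Mf t)[w]'hw).1, c)) d e := by
  classical
  -- pigeonhole on prefix/suffix profiles
  have hcard : Fintype.card (Finset (Fin k) × Finset (Fin k))
      < Fintype.card (Fin (P₀.length + 1)) := by
    rw [Fintype.card_prod, Fintype.card_finset, Fintype.card_fin, Fintype.card_fin]
    exact hbig
  obtain ⟨i0, j0, hne, hprof⟩ := Fintype.exists_ne_map_eq_of_card_lt
    (fun i : Fin (P₀.length + 1) =>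
      (((preS fst d (P₀.take i)).toFinite).toFinset,
        ((sufS lst e (P₀.drop i)).toFinite).toFinset)) hcard
  have hmain : ∀ i j : Fin (P₀.length + 1), (i : ℕ) < (j : ℕ) →
      preS fst d (P₀.take i) = preS fst d (P₀.take j) →
      sufS lst e (P₀.drop i) = sufS lst e (P₀.drop j) →
      ∃ Mf : ℕ → List (Piece k),
        StrictMono (fun t => (Mf t).length) ∧
        ∀ t, (∀ el ∈ Mf t, el ∈ P₀) ∧
          (¬ chainSat fst lst (Mf t) d e) ∧
          (∃ d', chainSat fst lst (Mf t) d' e) ∧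
          (∃ e', chainSat fst lst (Mf t) d e') ∧
          ∀ (w : ℕ) (hw : w < (Mf t).length), ∃ c,
            chainSat fst lst ((Mf t).set w (((Mf t)[w]'hw).1, c)) d e := by
    intro i j hij hpre hsuf
    have hjle : (j : ℕ) ≤ P₀.length := Nat.lt_succ_iff.1 j.isLt
    set P₁ := P₀.take i with hP₁
    set P₂ := (P₀.drop i).take ((j : ℕ) - i) with hP₂
    set P₃ := P₀.drop j with hP₃
    have h12 : P₁ ++ P₂ = P₀.take j := by
      rw [hP₁, hP₂, ← List.take_add]
      congr 1
      omega
    have h23 : P₂ ++ P₃ = P₀.drop i := by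
      rw [hP₂, hP₃]
      have hdd : P₀.drop j = (P₀.drop i).drop ((j : ℕ) - i) := by
        rw [List.drop_drop]
        congr 1
        omega
      rw [hdd, List.take_append_drop]
    have h0 : P₁ ++ (P₂ ++ P₃) = P₀ := by
      rw [h23, hP₁, List.take_append_drop]
    have hp : preS fst d (P₁ ++ P₂) = preS fst d P₁ := by
      rw [h12]
      exact hpre.symm
    have hs : sufS lst e (P₂ ++ P₃) = sufS lst e P₃ := by
      rw [h23]
      exact hsuf
    have hL2 : P₂.length = (j : ℕ) - (i : ℕ) := by
      rw [hP₂]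
      simp only [List.length_take, List.length_drop]
      omega
    have hLpos : 0 < P₂.length := by omega
    rw [← h0] at hnot hd he hm
    refine ⟨fun t => (P₁ ++ rep (t + 1) P₂) ++ P₃, ?_, ?_⟩
    · intro t1 t2 hlt
      simp only [List.length_append, rep_length]
      have h1 : (t1 + 1) * P₂.length < (t2 + 1) * P₂.length :=
        (Nat.mul_lt_mul_right hLpos).2 (by omega)
      omega
    · intro t
      obtain ⟨c1, c2, c3, c4⟩ :=
        pumped_all fst lst d e P₁ P₂ P₃ hLpos hp hs hnot hd he hm t
      refine ⟨?_, c1, c2, c3, c4⟩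
      intro el hel
      rw [← h0]
      rcases List.mem_append.1 hel with h' | h'
      · rcases List.mem_append.1 h' with h'' | h''
        · exact List.mem_append.2 (Or.inl h'')
        · exact List.mem_append.2 (Or.inr (List.mem_append.2 (Or.inl (rep_mem h''))))
      · exact List.mem_append.2 (Or.inr (List.mem_append.2 (Or.inr h')))
  have hpre0 := congrArg Prod.fst hprof
  have hsuf0 := congrArg Prod.snd hprof
  simp only at hpre0 hsuf0
  rw [Set.Finite.toFinset_inj] at hpre0 hsuf0
  rcases lt_or_gt_of_ne hne with hlt | hlt
  · exact hmain i0 j0 hlt hpre0 hsuf0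
  · exact hmain j0 i0 hlt hpre0.symm hsuf0.symm

theorem infinite_essential_of_long_chain (k : ℕ) (hk : 2 ≤ k) (G : Set (Pred k))
    (m : ℕ) (fst lst : Set (Tuple k 2)) (mid : Fin m → Set (Tuple k 3))
    (hlong : 2 ^ (2 * k ^ 2) + 2 < m + 2)
    (hess : Essential k (chainPred k m fst lst mid))
    (h1 : (⟨2, fst⟩ : Pred k) ∈ ppClosure k G)
    (h2 : (⟨2, lst⟩ : Pred k) ∈ ppClosure k G)
    (h3 : ∀ i, (⟨3, mid i⟩ : Pred k) ∈ ppClosure k G) :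
    { ρ ∈ ppClosure k G | Essential k ρ }.Infinite := by
  classical
  obtain ⟨d, e, v, hnot, hd, he, hm⟩ := chain_witness fst lst mid hess
  have hP₀len : (List.ofFn fun q : Fin m => (mid q, v q)).length = m := by simp
  -- convert the middle-coordinate witnesses to `getElem` form
  have hmg : ∀ (w : ℕ) (hw : w < (List.ofFn fun q : Fin m => (mid q, v q)).length), ∃ c,
      chainSat fst lst ((List.ofFn fun q : Fin m => (mid q, v q)).set w
        ((((List.ofFn fun q : Fin m => (mid q, v q))[w]'hw)).1, c)) d e := by
    intro w hw
    have hw' : w < m := by simpa using hw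
    obtain ⟨c, hc⟩ := hm ⟨w, hw'⟩
    refine ⟨c, ?_⟩
    have hfst : (((List.ofFn fun q : Fin m => (mid q, v q))[w]'hw)).1 = mid ⟨w, hw'⟩ := by
      rw [List.getElem_ofFn]
    rw [hfst]
    exact hc
  -- cardinality bound
  have hkk : k ≤ k ^ 2 := Nat.le_self_pow (by norm_num) k
  have hb2 : 2 ^ (k + k) ≤ 2 ^ (2 * k ^ 2) := Nat.pow_le_pow_right (by norm_num) (by omega)
  have hbig : 2 ^ k * 2 ^ k < (List.ofFn fun q : Fin m => (mid q, v q)).length + 1 := by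
    rw [hP₀len, ← pow_add]
    omega
  obtain ⟨Mf, hMono, hall⟩ := master_list fst lst d e _ hbig hnot hd he hmg
  apply Set.infinite_of_injective_forall_mem
    (f := fun t : ℕ => chainPred k (Mf t).length fst lst (fun q => ((Mf t).get q).1))
  · intro t1 t2 hft
    have hh := congrArg Sigma.fst hft
    simp only [chainPred] at hh
    exact hMono.injective (by omega)
  · intro t
    refine ⟨?_, ?_⟩
    · -- membership in the pp-closure
      apply chainPred_mem_ppClosure h1 h2
      intro q
      have hmem := List.get_mem (Mf t) q
      obtain ⟨q0, hq0⟩ := List.mem_ofFn.1 ((hall t).1 _ hmem)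
      have : ((Mf t).get q).1 = mid q0 := by rw [← hq0]
      rw [this]
      exact h3 q0
    · -- essentiality
      obtain ⟨-, c1, c2, c3, c4⟩ := hall t
      apply chain_essential_of_list fst lst (Mf t) d e c1 c2 c3
      intro q
      obtain ⟨c, hc⟩ := c4 q.1 q.2
      refine ⟨c, ?_⟩
      simpa [List.get_eq_getElem] using hc
end

section
/- Let k ≥ 2 and ρ ∈ R_k^n with n ≥ 1. The following three conditions are equivalent: (1) ρ is an essential predicate; (2) ρ ≠ ρ̃; (3) there exists an essential tuple for ρ. -/
def tilde {k n : ℕ} (R : Set (Tuple k n)) : Set (Tuple k n) :=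
  { x | ∀ i : Fin n, ∃ b : Fin k, Function.update x i b ∈ R }

def EssTuple {k n : ℕ} (R : Set (Tuple k n)) (a : Tuple k n) : Prop :=
  a ∉ R ∧ ∀ i : Fin n, ∃ b : Fin k, Function.update a i b ∈ R


lemma insert_eq_update {k m : ℕ} (x : Tuple k (m+1)) (i : Fin (m+1)) (b : Fin k) :
    i.insertNth b (fun j => x (i.succAbove j)) = Function.update x i b := by
  funext j
  refine Fin.succAboveCases i ?_ ?_ j
  · simp
  · intro j
    rw [Fin.insertNth_apply_succAbove, Function.update_of_ne (Fin.succAbove_ne i j)]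

theorem essential_tfae (k n : ℕ) (hk : 2 ≤ k) (hn : 1 ≤ n)
    (R : Set (Tuple k n)) :
    (Essential k ⟨n, R⟩ ↔ R ≠ tilde R) ∧
      (Essential k ⟨n, R⟩ ↔ ∃ a, EssTuple R a) := by
  obtain ⟨m, rfl⟩ : ∃ m, n = m + 1 := ⟨n - 1, (Nat.succ_pred_eq_of_pos hn).symm⟩
  have hRsub : R ⊆ tilde R := by
    intro x hx i
    exact ⟨x i, by rwa [Function.update_eq_self]⟩
  have hmain : Essential k ⟨m + 1, R⟩ ↔ R ≠ tilde R := by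
    constructor
    · intro hess hEq
      apply hess
      refine ⟨m + 1, fun i => ⟨m, {t | ∃ b, i.insertNth b t ∈ R}⟩,
        fun i => i.succAbove, fun i => Nat.lt_succ_self m,
        fun i => Fin.succAbove_right_injective, fun x => ?_⟩
      constructor
      · intro hx i
        obtain ⟨b, hb⟩ := hRsub hx i
        exact ⟨b, by rwa [insert_eq_update]⟩
      · intro h
        rw [hEq]
        intro i
        obtain ⟨b, hb⟩ := h i
        rw [insert_eq_update] at hb
        exact ⟨b, hb⟩
    · intro hne hmem
      apply hne
      obtain ⟨s, σ, z, hσ, hinj, hiff⟩ := hmem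
      refine Set.Subset.antisymm hRsub ?_
      intro x hx
      rw [hiff]
      intro i
      have hns : ¬ Function.Surjective (z i) := by
        intro hs
        have := Fintype.card_le_of_surjective _ hs
        simp only [Fintype.card_fin] at this
        exact absurd (hσ i) (not_lt.mpr this)
      have : ∃ j0 : Fin (m + 1), ∀ l, z i l ≠ j0 := by
        unfold Function.Surjective at hns
        push_neg at hns
        obtain ⟨j0, hj0⟩ := hns
        exact ⟨j0, fun l => hj0 l⟩
      obtain ⟨j0, hj0⟩ := this
      obtain ⟨b, hb⟩ := hx j0
      have := (hiff _).mp hb i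
      have heq : (fun l => Function.update x j0 b (z i l)) = fun l => x (z i l) := by
        funext l
        exact Function.update_of_ne (hj0 l) _ _
      rwa [heq] at this
  have hiff2 : (R ≠ tilde R) ↔ ∃ a, EssTuple R a := by
    constructor
    · intro h
      by_contra h'
      push_neg at h'
      apply h
      refine Set.Subset.antisymm hRsub ?_
      intro a ha
      by_contra haR
      exact h' a ⟨haR, ha⟩
    · rintro ⟨a, hnotR, hupd⟩ hEq
      exact hnotR (hEq ▸ hupd)
  exact ⟨hmain, hmain.trans hiff2⟩
end

section
/- Let k ≥ 2. For every predicate ρ ∈ R_k one has ρ ∈ AND(Strike(ρ) ∩ R̃_k); that is, every predicate is a conjunction (with no repeated variables inside a single conjunct) of essential predicates each obtainable from ρ by existentially quantifying some coordinates and injectively renaming the remaining coordinates. -/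
lemma append_apply {α : Type*} {m n : ℕ} (u : Fin m → α) (v : Fin n → α) (a : Fin (m+n)) :
    Fin.append u v a = if h : (a:ℕ) < m then u ⟨a, h⟩ else v ⟨(a:ℕ) - m, by omega⟩ := by
  rcases a with ⟨av, ha⟩
  rcases Nat.lt_or_ge av m with h|h
  · rw [dif_pos h]
    exact Fin.append_left u v ⟨av, h⟩
  · rw [dif_neg (Nat.not_lt.mpr h)]
    have e : (⟨av, ha⟩ : Fin (m+n)) = Fin.natAdd m ⟨av - m, by omega⟩ := Fin.ext (by simp; omega)
    conv_lhs => rw [e, Fin.append_right]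

lemma strike_self (k : ℕ) (ρ : Pred k) : ρ ∈ strike k ρ := by
  refine ⟨0, Fin.castAdd 0, fun a b hab => Fin.ext (congrArg Fin.val hab), fun x => ?_⟩
  have e : ∀ y : Tuple k 0, (fun j => Fin.append x y (Fin.castAdd 0 j)) = x :=
    fun y => funext fun j => Fin.append_left x y j
  constructor
  · intro hx; exact ⟨Fin.elim0, by rw [e]; exact hx⟩
  · rintro ⟨y, hy⟩; rw [e] at hy; exact hy

lemma strike_trans {k : ℕ} {ρ ρ' τ : Pred k} (h1 : ρ' ∈ strike k ρ) (h2 : τ ∈ strike k ρ') :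
    τ ∈ strike k ρ := by
  obtain ⟨l, z, hzinj, hz⟩ := h1
  obtain ⟨l', z', hz'inj, hz'⟩ := h2
  refine ⟨l' + l, fun t => if h : ((z t : ℕ)) < ρ'.1 then
      ⟨(z' ⟨(z t : ℕ), h⟩).val, by have := (z' ⟨(z t : ℕ), h⟩).isLt; omega⟩
    else ⟨τ.1 + l' + ((z t : ℕ) - ρ'.1), by have := (z t).isLt; omega⟩, ?_, ?_⟩
  · intro a b hab
    dsimp only at hab
    split_ifs at hab with ha hb hb <;> rw [Fin.mk.injEq] at hab
    · have h1 : z' ⟨(z a : ℕ), ha⟩ = z' ⟨(z b : ℕ), hb⟩ := Fin.ext hab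
      have h2 := hz'inj h1
      have h3 : (z a : ℕ) = (z b : ℕ) := by
        simpa using congrArg Fin.val h2
      exact hzinj (Fin.ext h3)
    · have := (z' ⟨(z a : ℕ), ha⟩).isLt
      omega
    · have := (z' ⟨(z b : ℕ), hb⟩).isLt
      omega
    · have := (z a).isLt; have := (z b).isLt
      exact hzinj (Fin.ext (by omega))
  · intro x
    have claim : ∀ (y' : Tuple k l') (y : Tuple k l),
        (fun t => Fin.append x (Fin.append y' y)
          (if h : ((z t : ℕ)) < ρ'.1 then
            (⟨(z' ⟨(z t : ℕ), h⟩).val, by have := (z' ⟨(z t : ℕ), h⟩).isLt; omega⟩ : Fin (τ.1 + (l' + l)))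
          else ⟨τ.1 + l' + ((z t : ℕ) - ρ'.1), by have := (z t).isLt; omega⟩))
        = (fun t => Fin.append (fun j => Fin.append x y' (z' j)) y (z t)) := by
      intro y' y
      funext t
      by_cases h : ((z t : ℕ)) < ρ'.1
      · rw [dif_pos h]
        have hv := (z' ⟨(z t : ℕ), h⟩).isLt
        simp only [append_apply]
        split_ifs <;>
          first
            | rfl
            | (simp_all; omega)
            | (congr 1; exact Fin.ext (by simp_all; omega))
      · rw [dif_neg h]
        have hv := (z t).isLt
        simp only [append_apply]
        split_ifs <;>
          first
            | rfl
            | (simp_all; omega)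
            | (congr 1; exact Fin.ext (by simp_all; omega))
    constructor
    · intro hx
      obtain ⟨y', hy'⟩ := (hz' x).mp hx
      obtain ⟨y, hy⟩ := (hz _).mp hy'
      exact ⟨Fin.append y' y, by rw [claim]; exact hy⟩
    · rintro ⟨Y, hY⟩
      have hYsplit : Fin.append (fun j : Fin l' => Y (Fin.castAdd l j))
          (fun j : Fin l => Y (Fin.natAdd l' j)) = Y := by
        funext a
        rw [append_apply]
        split_ifs with h
        · rfl
        · congr 1; exact Fin.ext (by simp; omega)
      rw [← hYsplit, claim] at hY
      exact (hz' x).mpr ⟨_, (hz _).mpr ⟨_, hY⟩⟩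

lemma proj_mem_strike {k : ℕ} (ρ : Pred k) {m : ℕ} (w : Fin m → Fin ρ.1)
    (hw : Function.Injective w) :
    (⟨m, {x | ∃ u ∈ ρ.2, ∀ j, u (w j) = x j}⟩ : Pred k) ∈ strike k ρ := by
  classical
  have hlt1 : ∀ (t : Fin ρ.1) (h : ∃ j, w j = t), (Classical.choose h).val < m + ρ.1 :=
    fun t h => by have := (Classical.choose h).isLt; omega
  have hlt2 : ∀ t : Fin ρ.1, m + t.val < m + ρ.1 := fun t => by have := t.isLt; omega
  refine ⟨ρ.1, fun t => if h : ∃ j, w j = t then ⟨(Classical.choose h).val, hlt1 t h⟩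
    else ⟨m + t.val, hlt2 t⟩, ?_, ?_⟩
  · intro a b hab
    dsimp only at hab
    split_ifs at hab with ha hb hb <;> rw [Fin.mk.injEq] at hab
    · have h2 : Classical.choose ha = Classical.choose hb := Fin.ext hab
      rw [← Classical.choose_spec ha, ← Classical.choose_spec hb, h2]
    · have := (Classical.choose ha).isLt; omega
    · have := (Classical.choose hb).isLt; omega
    · exact Fin.ext (by omega)
  · intro x
    constructor
    · rintro ⟨u, hu, hux⟩
      refine ⟨u, ?_⟩
      have e : (fun t => Fin.append x u
          (if h : ∃ j, w j = t then (⟨(Classical.choose h).val, hlt1 t h⟩ : Fin (m + ρ.1))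
          else ⟨m + t.val, hlt2 t⟩)) = u := by
        funext t
        by_cases h : ∃ j, w j = t
        · rw [dif_pos h]
          have hv := (Classical.choose h).isLt
          rw [append_apply]
          split_ifs with h'
          · have hut : u t = u (w (Classical.choose h)) :=
              congrArg u (Classical.choose_spec h).symm
            rw [hut]
            exact (hux _).symm
          · exact absurd (show ((⟨(Classical.choose h).val, hlt1 t h⟩ : Fin (m + ρ.1)) : ℕ) < m from hv) h'
        · rw [dif_neg h]
          rw [append_apply]
          split_ifs with h'
          · exact absurd h' (by simp)
          · congr 1; exact Fin.ext (by simp)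
      rw [e]; exact hu
    · rintro ⟨y, hy⟩
      refine ⟨_, hy, ?_⟩
      intro j
      dsimp only
      have h : ∃ j', w j' = w j := ⟨j, rfl⟩
      have hc : Classical.choose h = j := hw (Classical.choose_spec h)
      rw [dif_pos h, append_apply]
      have hv := (Classical.choose h).isLt
      split_ifs with h'
      · exact congrArg x (Fin.ext (by simp [hc]))
      · exact absurd (show ((⟨(Classical.choose h).val, hlt1 (w j) h⟩ : Fin (m + ρ.1)) : ℕ) < m from hv) h'

lemma andClosure_mono {k : ℕ} {S T : Set (Pred k)} (hST : S ⊆ T) :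
    andClosure k S ⊆ andClosure k T := by
  rintro ρ ⟨s, σ, z, h1, h2, h3⟩
  exact ⟨s, σ, z, fun i => hST (h1 i), h2, h3⟩

lemma andClosure_comp {k : ℕ} (S : Set (Pred k)) (ρ : Pred k)
    (s : ℕ) (τ : Fin s → Pred k) (z : (i : Fin s) → Fin (τ i).1 → Fin ρ.1)
    (hinj : ∀ i, Function.Injective (z i))
    (hiff : ∀ x : Tuple k ρ.1, x ∈ ρ.2 ↔ ∀ i, (fun j => x (z i j)) ∈ (τ i).2)
    (hτ : ∀ i, τ i ∈ andClosure k S) :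
    ρ ∈ andClosure k S := by
  choose s' σ' w' hS hwinj hiff' using hτ
  let T := (i : Fin s) × Fin (s' i)
  let e : T ≃ Fin (Fintype.card T) := Fintype.equivFin T
  refine ⟨Fintype.card T, fun a => σ' (e.symm a).1 (e.symm a).2,
    fun a j => z (e.symm a).1 (w' (e.symm a).1 (e.symm a).2 j), fun a => hS _ _,
    fun a => (hinj _).comp (hwinj _ _), ?_⟩
  intro x
  rw [hiff]
  have key : ∀ i, ((fun j => x (z i j)) ∈ (τ i).2 ↔
      ∀ b : Fin (s' i), (fun j => x (z i (w' i b j))) ∈ (σ' i b).2) :=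
    fun i => hiff' i _
  have hforall : (∀ t : T, (fun j => x (z t.1 (w' t.1 t.2 j))) ∈ (σ' t.1 t.2).2) ↔
      (∀ a : Fin (Fintype.card T),
        (fun j => x (z (e.symm a).1 (w' (e.symm a).1 (e.symm a).2 j))) ∈
          (σ' (e.symm a).1 (e.symm a).2).2) :=
    e.symm.surjective.forall
  constructor
  · intro h
    exact hforall.mp (fun t => (key t.1).mp (h t.1) t.2)
  · intro h i
    rw [key i]
    intro b
    exact hforall.mpr h ⟨i, b⟩

lemma main_aux (k : ℕ) : ∀ n (ρ : Pred k), ρ.1 = n →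
    ρ ∈ andClosure k (strike k ρ ∩ { σ | Essential k σ }) := by
  intro n
  induction n using Nat.strong_induction_on with
  | _ n ih =>
    intro ρ hρn
    by_cases hE : Essential k ρ
    · exact ⟨1, fun _ => ρ, fun _ => id, fun _ => ⟨strike_self k ρ, hE⟩,
        fun _ a b h => h, fun x => ⟨fun hx _ => hx, fun h => h 0⟩⟩
    · rw [Essential, not_not] at hE
      obtain ⟨s, σ, z, hσ, hzinj, hiff⟩ := hE
      set P : Fin s → Pred k :=
        fun i => ⟨(σ i).1, {x | ∃ u ∈ ρ.2, ∀ j, u (z i j) = x j}⟩ with hP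
      have hPs : ∀ i, P i ∈ strike k ρ := fun i => proj_mem_strike ρ (z i) (hzinj i)
      have hPiff : ∀ x : Tuple k ρ.1, x ∈ ρ.2 ↔ ∀ i, (fun j => x (z i j)) ∈ (P i).2 := by
        intro x
        constructor
        · intro hx i; exact ⟨x, hx, fun j => rfl⟩
        · intro h
          rw [hiff]
          intro i
          obtain ⟨u, hu, hux⟩ := h i
          have h2 := (hiff u).mp hu i
          have e : (fun j => u (z i j)) = (fun j => x (z i j)) := funext hux
          rwa [e] at h2
      have hP' : ∀ i, P i ∈ andClosure k (strike k ρ ∩ {σ | Essential k σ}) := by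
        intro i
        have h1 := ih (σ i).1 (by rw [← hρn]; exact hσ i) (P i) rfl
        refine andClosure_mono ?_ h1
        rintro τ ⟨hτ1, hτ2⟩
        exact ⟨strike_trans (hPs i) hτ1, hτ2⟩
      exact andClosure_comp _ ρ s P z hzinj hPiff hP'

theorem mem_andClosure_strike_essential (k : ℕ) (hk : 2 ≤ k) (ρ : Pred k) :
    ρ ∈ andClosure k (strike k ρ ∩ { σ | Essential k σ }) :=
  main_aux k ρ.1 ρ rfl
end

section
/- Let k ≥ 2. For every set S ⊆ R_k one has [[S] ∩ R̃_k] = [S]; that is, every primitive-positively closed set of predicates is generated by its essential predicates. -/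
section AuxPP

-- value-based append evaluation
lemma app_lt {α : Type*} {m n : ℕ} (u : Fin m → α) (v : Fin n → α) (i : Fin (m + n))
    (h : i.1 < m) : Fin.append u v i = u ⟨i.1, h⟩ := by
  have e : i = Fin.castAdd n ⟨i.1, h⟩ := Fin.ext rfl
  conv_lhs => rw [e]
  exact Fin.append_left u v _

lemma app_ge {α : Type*} {m n : ℕ} (u : Fin m → α) (v : Fin n → α) (i : Fin (m + n))
    (h : m ≤ i.1) : Fin.append u v i = v ⟨i.1 - m, by have := i.isLt; omega⟩ := by
  have e : i = Fin.natAdd m ⟨i.1 - m, by have := i.isLt; omega⟩ := Fin.ext (by simp; omega)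
  conv_lhs => rw [e]
  exact Fin.append_right u v _

lemma append_castLE {k n l L : ℕ} (x : Tuple k n) (Y : Tuple k L) (y : Tuple k l)
    (hL : l ≤ L) (hy : ∀ q : Fin l, Y ⟨q.1, by have := q.isLt; omega⟩ = y q) (v : Fin (n + l)) :
    Fin.append x Y (Fin.castLE (by omega) v) = Fin.append x y v := by
  by_cases hv : v.1 < n
  · exact (app_lt x Y _ hv).trans (app_lt x y v hv).symm
  · have h1 : n ≤ v.1 := by omega
    have h2 := app_ge x Y (Fin.castLE (show n + l ≤ n + L by omega) v) h1
    have h3 := app_ge x y v h1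
    rw [h2, h3]
    exact hy ⟨v.1 - n, by have := v.isLt; omega⟩

def HasFormula (k : ℕ) (S : Set (Pred k)) (n : ℕ) (P : Set (Tuple k n)) (l s : ℕ) : Prop :=
  ∃ (σ : Fin s → Pred k) (z : (i : Fin s) → Fin (σ i).1 → Fin (n + l)),
    (∀ i, σ i ∈ S ∪ {eqPred k, falsePred k}) ∧
    ∀ x : Tuple k n, x ∈ P ↔
      ∃ y : Tuple k l, ∀ i, (fun j => Fin.append x y (z i j)) ∈ (σ i).2

lemma ppClosure_iff {k : ℕ} {S : Set (Pred k)} {ρ : Pred k} :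
    ρ ∈ ppClosure k S ↔ ∃ l s, HasFormula k S ρ.1 ρ.2 l s := Iff.rfl

lemma hasFormula_self {k : ℕ} {S : Set (Pred k)} {ρ : Pred k}
    (h : ρ ∈ S ∪ {eqPred k, falsePred k}) : HasFormula k S ρ.1 ρ.2 0 1 := by
  refine ⟨fun _ => ρ, fun _ c => Fin.castAdd 0 c, fun _ => h, fun x => ?_⟩
  have key : ∀ (y : Tuple k 0), (fun j => Fin.append x y (Fin.castAdd 0 j)) = x :=
    fun y => funext fun j => Fin.append_left x y j
  exact ⟨fun hx => ⟨Fin.elim0, fun _ => by rw [key]; exact hx⟩,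
    fun ⟨y, hy⟩ => by rw [← key y]; exact hy 0⟩

lemma mem_ppClosure_self {k : ℕ} {S : Set (Pred k)} {ρ : Pred k}
    (h : ρ ∈ S ∪ {eqPred k, falsePred k}) : ρ ∈ ppClosure k S :=
  ⟨0, 1, hasFormula_self h⟩

lemma pp_mono {k : ℕ} {S S' : Set (Pred k)} (h : S ⊆ S') :
    ppClosure k S ⊆ ppClosure k S' := by
  rintro ρ ⟨l, s, σ, z, hσ, hsem⟩
  exact ⟨l, s, σ, z, fun i => Set.union_subset_union_left _ h (hσ i), hsem⟩

-- padding
def padF (k : ℕ) {n l l₂ s : ℕ} (s₂ : ℕ) (σ : Fin s → Pred k)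
    (z : (i : Fin s) → Fin (σ i).1 → Fin (n + l)) (hl : l < l₂) (t : Fin s₂) :
    Σ ρ' : Pred k, (Fin ρ'.1 → Fin (n + l₂)) :=
  if h : t.1 < s then ⟨σ ⟨t.1, h⟩, fun c => Fin.castLE (by omega) (z ⟨t.1, h⟩ c)⟩
  else ⟨eqPred k, fun _ => ⟨n + l, by omega⟩⟩

lemma mem_sig {k M : ℕ} (g : Fin M → Fin k) {F G : Σ ρ' : Pred k, (Fin ρ'.1 → Fin M)}
    (h : F = G) (H : (fun j => g (F.2 j)) ∈ F.1.2) : (fun j => g (G.2 j)) ∈ G.1.2 := by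
  subst h; exact H

lemma hasFormula_pad {k : ℕ} (d : Fin k) {S : Set (Pred k)} {n : ℕ} {P : Set (Tuple k n)}
    {l s l₂ s₂ : ℕ} (hl : l < l₂) (hs : s ≤ s₂) (H : HasFormula k S n P l s) :
    HasFormula k S n P l₂ s₂ := by
  obtain ⟨σ, z, hσ, hsem⟩ := H
  refine ⟨fun t => (padF k s₂ σ z hl t).1, fun t => (padF k s₂ σ z hl t).2, ?_, ?_⟩
  · intro t
    by_cases h : t.1 < s
    · simp only [padF, dif_pos h]; exact hσ _
    · simp only [padF, dif_neg h]; exact Or.inr (Set.mem_insert _ _)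
  · intro x
    rw [hsem x]
    constructor
    · rintro ⟨y, hy⟩
      refine ⟨fun q => if h : q.1 < l then y ⟨q.1, h⟩ else d, fun t => ?_⟩
      by_cases h : t.1 < s
      · have hEq : padF k s₂ σ z hl t
            = ⟨σ ⟨t.1, h⟩, fun c => Fin.castLE (by omega) (z ⟨t.1, h⟩ c)⟩ := dif_pos h
        refine mem_sig _ hEq.symm ?_
        have e : (fun c => Fin.append x (fun q : Fin l₂ => if h : q.1 < l then y ⟨q.1, h⟩ else d)
              (Fin.castLE (by omega) (z ⟨t.1, h⟩ c)))
            = (fun c => Fin.append x y (z ⟨t.1, h⟩ c)) := by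
          funext c
          exact append_castLE x _ y (le_of_lt hl) (fun q => by simp [q.isLt]) _
        show (fun c => Fin.append x (fun q : Fin l₂ => if h : q.1 < l then y ⟨q.1, h⟩ else d)
              (Fin.castLE (by omega) (z ⟨t.1, h⟩ c))) ∈ (σ ⟨t.1, h⟩).2
        rw [e]; exact hy ⟨t.1, h⟩
      · have hEq : padF k s₂ σ z hl t
            = ⟨eqPred k, fun _ => ⟨n + l, by omega⟩⟩ := dif_neg h
        exact mem_sig _ hEq.symm rfl
    · rintro ⟨Y, hY⟩
      refine ⟨fun q => Y ⟨q.1, by have := q.isLt; omega⟩, fun i => ?_⟩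
      have pf : i.1 < s₂ := by have := i.isLt; omega
      have ht := hY ⟨i.1, pf⟩
      have hEq : padF k s₂ σ z hl ⟨i.1, pf⟩
          = ⟨σ i, fun c => Fin.castLE (by omega) (z i c)⟩ := dif_pos i.isLt
      have ht2 := mem_sig (Fin.append x Y) hEq ht
      have e : (fun j => Fin.append x (fun q : Fin l => Y ⟨q.1, by have := q.isLt; omega⟩) (z i j))
          = (fun j => Fin.append x Y (Fin.castLE (by omega) (z i j))) := by
        funext c
        exact (append_castLE x Y _ (le_of_lt hl) (fun q => rfl) _).symm
      show (fun j => Fin.append x (fun q : Fin l => Y ⟨q.1, by have := q.isLt; omega⟩) (z i j))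
          ∈ (σ i).2
      rw [e]; exact ht2

lemma blk_lt {a b i r : ℕ} (hi : i < a) (hr : r < b) : i * b + r < a * b := by
  have h1 : i * b + r < (i + 1) * b := by
    have : (i + 1) * b = i * b + b := by ring
    omega
  have h2 : (i + 1) * b ≤ a * b := Nat.mul_le_mul_right b hi
  omega

def dFst {s s' : ℕ} (h : 0 < s') (t : Fin (s * s')) : Fin s :=
  ⟨t.1 / s', (Nat.div_lt_iff_lt_mul h).mpr t.isLt⟩

def dSnd {s s' : ℕ} (h : 0 < s') (t : Fin (s * s')) : Fin s' :=
  ⟨t.1 % s', Nat.mod_lt _ h⟩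

def eIdx {s s' : ℕ} (i : Fin s) (j : Fin s') : Fin (s * s') :=
  ⟨i.1 * s' + j.1, blk_lt i.isLt j.isLt⟩

lemma dFst_eIdx {s s' : ℕ} (h : 0 < s') (i : Fin s) (j : Fin s') : dFst h (eIdx i j) = i := by
  apply Fin.ext
  show (i.1 * s' + j.1) / s' = i.1
  rw [mul_comm, Nat.mul_add_div h, Nat.div_eq_of_lt j.isLt, add_zero]

lemma dSnd_eIdx {s s' : ℕ} (h : 0 < s') (i : Fin s) (j : Fin s') : dSnd h (eIdx i j) = j := by
  apply Fin.ext
  show (i.1 * s' + j.1) % s' = j.1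
  rw [mul_comm, Nat.mul_add_mod, Nat.mod_eq_of_lt j.isLt]

def remapV {n l l' s m : ℕ} (zi : Fin m → Fin (n + l)) (i : Fin s) (v : Fin (m + l')) :
    Fin (n + (l + s * l')) :=
  if h : v.1 < m then Fin.castLE (by omega) (zi ⟨v.1, h⟩)
  else ⟨n + l + i.1 * l' + (v.1 - m),
    by have h1 : v.1 - m < l' := by have := v.isLt; omega
       have h2 := blk_lt i.isLt h1; omega⟩

def yPart {k l : ℕ} (T : ℕ) (Y : Tuple k (l + T)) : Tuple k l :=
  fun q => Y ⟨q.1, by have := q.isLt; omega⟩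

def vPart {k l l' s : ℕ} (Y : Tuple k (l + s * l')) (i : Fin s) : Tuple k l' :=
  fun p => Y ⟨l + i.1 * l' + p.1, by have := blk_lt i.isLt p.isLt; omega⟩

lemma remapV_eval {k n l l' s m : ℕ} (x : Tuple k n) (Y : Tuple k (l + s * l'))
    (zi : Fin m → Fin (n + l)) (i : Fin s) (v : Fin (m + l')) :
    Fin.append x Y (remapV zi i v)
      = Fin.append (fun c : Fin m => Fin.append x (yPart (s * l') Y) (zi c)) (vPart Y i) v := by
  unfold remapV
  by_cases h : v.1 < m
  · rw [dif_pos h, app_lt _ _ v h]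
    exact append_castLE x Y (yPart (s * l') Y) (by omega) (fun q => rfl) (zi ⟨v.1, h⟩)
  · rw [dif_neg h, app_ge _ _ v (by omega)]
    have h2 := app_ge x Y (⟨n + l + i.1 * l' + (v.1 - m), by
      have h1 : v.1 - m < l' := by have := v.isLt; omega
      have h2 := blk_lt i.isLt h1; omega⟩ : Fin (n + (l + s * l'))) (by simp; omega)
    rw [h2]
    show Y _ = Y _
    congr 1
    apply Fin.ext
    simp
    omega

def buildY {k l l' s : ℕ} (y : Tuple k l) (v : Fin s → Tuple k l') (hl'0 : 0 < l') :
    Tuple k (l + s * l') :=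
  fun q => if h : q.1 < l then y ⟨q.1, h⟩
    else v ⟨(q.1 - l) / l', (Nat.div_lt_iff_lt_mul hl'0).mpr (by have := q.isLt; omega)⟩
          ⟨(q.1 - l) % l', Nat.mod_lt _ hl'0⟩

lemma yPart_buildY {k l l' s : ℕ} (y : Tuple k l) (v : Fin s → Tuple k l') (hl'0 : 0 < l') :
    yPart (s * l') (buildY y v hl'0) = y := funext fun q => by
  unfold yPart buildY
  rw [dif_pos q.isLt]

lemma vPart_buildY {k l l' s : ℕ} (y : Tuple k l) (v : Fin s → Tuple k l') (hl'0 : 0 < l')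
    (i : Fin s) : vPart (buildY y v hl'0) i = v i := funext fun p => by
  unfold vPart buildY
  rw [dif_neg (show ¬(l + i.1 * l' + p.1 < l) by omega)]
  have h3 : l + i.1 * l' + p.1 - l = l' * i.1 + p.1 := by rw [mul_comm]; omega
  have ha : (l + i.1 * l' + p.1 - l) / l' = i.1 := by
    rw [h3, Nat.mul_add_div hl'0, Nat.div_eq_of_lt p.isLt, add_zero]
  have hb : (l + i.1 * l' + p.1 - l) % l' = p.1 := by
    rw [h3, Nat.mul_add_mod, Nat.mod_eq_of_lt p.isLt]
  have key : ∀ (a : Fin s) (b : Fin l'), a = i → b = p → v a b = v i p := by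
    rintro a b rfl rfl; rfl
  exact key _ _ (Fin.ext ha) (Fin.ext hb)

lemma conj_transport {k : ℕ} {s s' : ℕ} (τ : Fin s → Fin s' → Pred k) {A : Fin s → Sort*}
    (w : (i : Fin s) → (j : Fin s') → Fin (τ i j).1 → A i) (g : (i : Fin s) → A i → Fin k)
    {i i' : Fin s} {j j' : Fin s'} (h1 : i = i') (h2 : j = j')
    (H : (fun c => g i (w i j c)) ∈ (τ i j).2) : (fun c => g i' (w i' j' c)) ∈ (τ i' j').2 := by
  subst h1; subst h2; exact H

lemma pp_trans {k : ℕ} (hk0 : 0 < k) {S : Set (Pred k)} :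
    ppClosure k (ppClosure k S) ⊆ ppClosure k S := by
  rintro ⟨n, P⟩ ⟨l, s, σ, z, hσ, hsem⟩
  obtain ⟨d⟩ : Nonempty (Fin k) := ⟨⟨0, hk0⟩⟩
  have hin : ∀ i : Fin s, ∃ la sa, HasFormula k S (σ i).1 (σ i).2 la sa := by
    intro i
    rcases hσ i with h | h
    · exact h
    · exact ⟨0, 1, hasFormula_self (Or.inr h)⟩
  choose la sa hF using hin
  set l' := (Finset.univ.sup la) + 1 with hl'def
  set s' := (Finset.univ.sup sa) + 1 with hs'def
  have hl'0 : 0 < l' := Nat.succ_pos _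
  have hs'0 : 0 < s' := Nat.succ_pos _
  have hF' : ∀ i, HasFormula k S (σ i).1 (σ i).2 l' s' := fun i =>
    hasFormula_pad d (Nat.lt_succ_of_le (Finset.le_sup (Finset.mem_univ i)))
      (le_trans (Finset.le_sup (Finset.mem_univ i)) (Nat.le_succ _)) (hF i)
  choose τ w hand using hF'
  refine ⟨l + s * l', s * s', fun t => τ (dFst hs'0 t) (dSnd hs'0 t),
    fun t c => remapV (z (dFst hs'0 t)) (dFst hs'0 t) (w (dFst hs'0 t) (dSnd hs'0 t) c),
    fun t => (hand _).1 _, fun x => ?_⟩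
  rw [hsem x]
  constructor
  · rintro ⟨y, hy⟩
    have hv : ∀ i, ∃ v : Tuple k l',
        ∀ j, (fun c => Fin.append (fun jj => Fin.append x y (z i jj)) v (w i j c)) ∈ (τ i j).2 :=
      fun i => ((hand i).2 _).mp (hy i)
    choose v hvv using hv
    refine ⟨buildY y v hl'0, fun t => ?_⟩
    show (fun c => Fin.append x (buildY y v hl'0)
        (remapV (z (dFst hs'0 t)) (dFst hs'0 t) (w (dFst hs'0 t) (dSnd hs'0 t) c)))
      ∈ (τ (dFst hs'0 t) (dSnd hs'0 t)).2
    have e : (fun c => Fin.append x (buildY y v hl'0)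
          (remapV (z (dFst hs'0 t)) (dFst hs'0 t) (w (dFst hs'0 t) (dSnd hs'0 t) c)))
        = (fun c => Fin.append (fun jj => Fin.append x y (z (dFst hs'0 t) jj)) (v (dFst hs'0 t))
            (w (dFst hs'0 t) (dSnd hs'0 t) c)) := by
      funext c
      rw [remapV_eval, yPart_buildY, vPart_buildY]
    rw [e]
    exact hvv _ _
  · rintro ⟨Y, hY⟩
    refine ⟨yPart (s * l') Y, fun i => ?_⟩
    refine ((hand i).2 _).mpr ⟨vPart Y i, fun j => ?_⟩
    have ht2 := conj_transport τ w (fun i0 v0 => Fin.append x Y (remapV (z i0) i0 v0))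
      (dFst_eIdx hs'0 i j) (dSnd_eIdx hs'0 i j) (hY (eIdx i j))
    have e : (fun c => Fin.append (fun jj => Fin.append x (yPart (s * l') Y) (z i jj))
          (vPart Y i) (w i j c))
        = (fun c => Fin.append x Y (remapV (z i) i (w i j c))) :=
      funext fun c => (remapV_eval x Y (z i) i (w i j c)).symm
    rw [e]
    exact ht2

lemma proj_mem_pp {k : ℕ} (ρ : Pred k) {m : ℕ} (z : Fin m → Fin ρ.1)
    (hz : Function.Injective z) :
    (⟨m, {u | ∃ w ∈ ρ.2, ∀ j, w (z j) = u j}⟩ : Pred k) ∈ ppClosure k {ρ} := by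
  classical
  refine ⟨ρ.1, 1, fun _ => ρ,
    fun _ c => if h : ∃ j, z j = c then Fin.castAdd ρ.1 h.choose else Fin.natAdd m c,
    fun _ => Or.inl rfl, fun x => ?_⟩
  constructor
  · rintro ⟨w, hw, he⟩
    refine ⟨w, fun i => ?_⟩
    show (fun c => Fin.append x w
        (if h : ∃ j, z j = c then Fin.castAdd ρ.1 h.choose else Fin.natAdd m c)) ∈ ρ.2
    have e : (fun c => Fin.append x w
        (if h : ∃ j, z j = c then Fin.castAdd ρ.1 h.choose else Fin.natAdd m c)) = w := by
      funext c
      by_cases h : ∃ j, z j = c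
      · rw [dif_pos h, Fin.append_left]
        exact ((he h.choose).symm).trans (congrArg w h.choose_spec)
      · rw [dif_neg h, Fin.append_right]
    rw [e]
    exact hw
  · rintro ⟨y, hy⟩
    refine ⟨fun c => Fin.append x y
        (if h : ∃ j, z j = c then Fin.castAdd ρ.1 h.choose else Fin.natAdd m c), hy 0,
        fun j => ?_⟩
    show Fin.append x y
        (if h : ∃ j', z j' = z j then Fin.castAdd ρ.1 h.choose else Fin.natAdd m (z j)) = x j
    have hex : ∃ j', z j' = z j := ⟨j, rfl⟩
    rw [dif_pos hex]
    have hcj : hex.choose = j := hz hex.choose_spec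
    rw [hcj, Fin.append_left]


end AuxPP

theorem ppClosure_essential (k : ℕ) (hk : 2 ≤ k) (S : Set (Pred k)) :
    ppClosure k { ρ ∈ ppClosure k S | Essential k ρ } = ppClosure k S := by
  have hk0 : 0 < k := by omega
  set T := { ρ ∈ ppClosure k S | Essential k ρ } with hT
  apply Set.Subset.antisymm
  · exact (pp_mono (fun ρ hρ => hρ.1)).trans (pp_trans hk0)
  · have key : ∀ n (ρ : Pred k), ρ.1 = n → ρ ∈ ppClosure k S → ρ ∈ ppClosure k T := by
      intro n
      induction n using Nat.strong_induction_on with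
      | _ n IH =>
        intro ρ hn hρ
        by_cases hE : Essential k ρ
        · exact mem_ppClosure_self (Or.inl ⟨hρ, hE⟩)
        · have hA : ρ ∈ andClosure k {σ : Pred k | σ.1 < ρ.1} := not_not.mp hE
          obtain ⟨s, σ, z, hlt, hinj, hsem⟩ := hA
          set π : Fin s → Pred k :=
            fun i => ⟨(σ i).1, {u | ∃ w ∈ ρ.2, ∀ j, w (z i j) = u j}⟩ with hπ
          have hπS : ∀ i, π i ∈ ppClosure k S := by
            intro i
            have h1 := proj_mem_pp ρ (z i) (hinj i)
            have h2 : ppClosure k {ρ} ⊆ ppClosure k (ppClosure k S) :=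
              pp_mono (fun a ha => by rw [Set.mem_singleton_iff] at ha; rw [ha]; exact hρ)
            exact pp_trans hk0 (h2 h1)
          have hπT : ∀ i, π i ∈ ppClosure k T := fun i =>
            IH (σ i).1 (by have := hlt i; simp only [Set.mem_setOf_eq] at this; omega)
              (π i) rfl (hπS i)
          apply pp_trans hk0
          refine ⟨0, s, π, fun i j => Fin.castAdd 0 (z i j), fun i => Or.inl (hπT i),
            fun x => ?_⟩
          have keyx : ∀ (y : Tuple k 0) i,
              (fun j => Fin.append x y (Fin.castAdd 0 (z i j))) = (fun j => x (z i j)) :=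
            fun y i => funext fun j => Fin.append_left x y _
          rw [hsem x]
          constructor
          · intro hx
            refine ⟨Fin.elim0, fun i => ?_⟩
            show (fun j => Fin.append x Fin.elim0 (Fin.castAdd 0 (z i j))) ∈ (π i).2
            rw [keyx]
            exact ⟨x, (hsem x).mpr hx, fun j => rfl⟩
          · rintro ⟨y, hy⟩ i
            have h1 : (fun j => Fin.append x y (Fin.castAdd 0 (z i j))) ∈ (π i).2 := hy i
            rw [keyx y i] at h1
            obtain ⟨w, hw, hwe⟩ := h1
            have e : (fun j => x (z i j)) = (fun j => w (z i j)) :=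
              funext fun j => (hwe j).symm
            show (fun j => x (z i j)) ∈ (σ i).2
            rw [e]
            exact (hsem w).mp hw i
    intro ρ hρ
    exact key ρ.1 ρ rfl hρ
end

section
/- Let k ≥ 2, let ρ ∈ R_k, and let α_i, β_i ∈ E_k^{s_i} for i ∈ {1,…,n} (with the arity of ρ equal to s_1+…+s_n) satisfy ρ(α_1α_2…α_n) = 0 and, for every j ∈ {1,…,n}, ρ(α_1…α_{j−1}β_jα_{j+1}…α_n) = 1 (concatenation of blocks). Then there exists an essential predicate ρ' ∈ [{ρ}] with ar(ρ') ≥ n. -/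
/-- Auxiliary: the predicate obtained from `R` by keeping the coordinates in the
support of `p` (renamed according to `p`) and existentially quantifying the rest. -/
def subPred {k : ℕ} (M : ℕ) (R : Set (Tuple k M)) (m : ℕ) (p : Fin M → Option (Fin m)) :
    Set (Tuple k m) :=
  {x | ∃ y : Tuple k M, y ∈ R ∧ ∀ t j, p t = some j → y t = x j}

/-- `p` is injective on its support. -/
def InjOnSupp {M m : ℕ} (p : Fin M → Option (Fin m)) : Prop :=
  ∀ ⦃t₁ t₂ j⦄, p t₁ = some j → p t₂ = some j → t₁ = t₂

lemma subPred_mem_ppClosure {k : ℕ} (M : ℕ) (R : Set (Tuple k M)) (m : ℕ)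
    (p : Fin M → Option (Fin m)) :
    (⟨m, subPred M R m p⟩ : Pred k) ∈ ppClosure k {(⟨M, R⟩ : Pred k)} := by
  refine ⟨M, 1, fun _ => ⟨M, R⟩,
    fun _ t => (p t).elim (Fin.natAdd m t) (Fin.castAdd M), fun i => Or.inl rfl, fun x => ?_⟩
  constructor
  · rintro ⟨u, hu, hag⟩
    refine ⟨u, fun i => ?_⟩
    have : (fun t => Fin.append x u ((p t).elim (Fin.natAdd m t) (Fin.castAdd M))) = u := by
      funext t
      cases h : p t with
      | none => simp [Fin.append_right]
      | some j => simpa [Fin.append_left] using (hag t j h).symm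
    exact Set.mem_of_eq_of_mem this hu
  · rintro ⟨y, hy⟩
    refine ⟨fun t => Fin.append x y ((p t).elim (Fin.natAdd m t) (Fin.castAdd M)),
      hy 0, fun t j h => ?_⟩
    simp [h, Fin.append_left]

theorem exists_essential_of_blocks (k M n : ℕ) (hk : 2 ≤ k)
    (R : Set (Tuple k M)) (blk : Fin M → Fin n) (hblk : Monotone blk)
    (α β : Tuple k M)
    (h0 : α ∉ R)
    (h1 : ∀ j : Fin n, (fun i => if blk i = j then β i else α i) ∈ R) :
    ∃ ρ' ∈ ppClosure k {(⟨M, R⟩ : Pred k)}, Essential k ρ' ∧ n ≤ ρ'.1 := by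
  classical
  set P : ℕ → Prop := fun m => ∃ p : Fin M → Option (Fin m), InjOnSupp p ∧
    ∃ (b : Fin m → Fin n) (a c : Tuple k m),
      a ∉ subPred M R m p ∧
      ∀ j, (fun s => if b s = j then c s else a s) ∈ subPred M R m p with hPdef
  have hPM : P M := by
    refine ⟨fun t => some t, fun t₁ t₂ j h₁ h₂ => by
      simpa using (Option.some.inj h₁).trans (Option.some.inj h₂).symm,
      blk, α, β, ?_, ?_⟩
    · rintro ⟨u, hu, hag⟩
      have : u = α := funext fun t => hag t t rfl
      exact h0 (this ▸ hu)
    · intro j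
      exact ⟨_, h1 j, fun t j' h => by obtain rfl := Option.some.inj h; rfl⟩
  have hEx : ∃ m, P m := ⟨M, hPM⟩
  obtain ⟨p, hpinj, b, a, c, ha, hc⟩ := Nat.find_spec hEx
  refine ⟨⟨Nat.find hEx, subPred M R (Nat.find hEx) p⟩,
    subPred_mem_ppClosure M R (Nat.find hEx) p, ?_, ?_⟩
  · -- Essential
    rintro ⟨s, σ, z, hlt, hzinj, hiff⟩
    have hna : ¬ ∀ i, (fun j => a (z i j)) ∈ (σ i).2 := fun h => ha ((hiff a).mpr h)
    push_neg at hna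
    obtain ⟨i, hi⟩ := hna
    have hm' : (σ i).1 < Nat.find hEx := hlt i
    refine Nat.find_min hEx hm' ?_
    have hzi : Function.Injective (z i) := hzinj i
    have hpi := Function.partialInv_of_injective hzi
    refine ⟨fun t => (p t).bind (Function.partialInv (z i)), ?_,
      fun s' => b (z i s'), fun s' => a (z i s'), fun s' => c (z i s'), ?_, ?_⟩
    · intro t₁ t₂ j h₁ h₂
      obtain ⟨s₁, hp₁, hv₁⟩ := Option.bind_eq_some_iff.mp h₁
      obtain ⟨s₂, hp₂, hv₂⟩ := Option.bind_eq_some_iff.mp h₂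
      have e₁ : z i j = s₁ := (hpi j s₁).mp hv₁
      have e₂ : z i j = s₂ := (hpi j s₂).mp hv₂
      have e : s₁ = s₂ := e₁.symm.trans e₂
      subst e
      exact hpinj hp₁ hp₂
    · rintro ⟨u, hu, hag⟩
      set x : Tuple k (Nat.find hEx) :=
        fun s' => if h : ∃ t, p t = some s' then u h.choose else a s' with hxdef
      have hx : x ∈ subPred M R (Nat.find hEx) p := by
        refine ⟨u, hu, fun t j h => ?_⟩
        have hex : ∃ t', p t' = some j := ⟨t, h⟩
        have hct : hex.choose = t := hpinj hex.choose_spec h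
        rw [hxdef]
        simp only [dif_pos hex, hct]
      have hxz : (fun j => x (z i j)) = fun j => a (z i j) := by
        funext s'
        rw [hxdef]
        by_cases h : ∃ t, p t = some (z i s')
        · simp only [dif_pos h]
          have hch : p h.choose = some (z i s') := h.choose_spec
          have hp' : (p h.choose).bind (Function.partialInv (z i)) = some s' := by
            rw [hch]
            simpa using Function.partialInv_left hzi s'
          exact hag h.choose s' hp'
        · simp only [dif_neg h]
      exact hi (hxz ▸ ((hiff x).mp hx i))
    · intro j
      obtain ⟨u, hu, hag⟩ := hc j
      refine ⟨u, hu, fun t s' h => ?_⟩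
      obtain ⟨s₀, hp₀, hv₀⟩ := Option.bind_eq_some_iff.mp h
      have e : z i s' = s₀ := (hpi s' s₀).mp hv₀
      have := hag t (z i s') (e ▸ hp₀)
      simpa using this
  · -- n ≤ arity
    have hbsurj : Function.Surjective b := by
      intro j
      by_contra h
      push_neg at h
      have he : (fun s => if b s = j then c s else a s) = a :=
        funext fun s => if_neg (h s)
      exact ha (he ▸ hc j)
    simpa using Fintype.card_le_of_surjective b hbsurj
end

section
/- Let k ≥ 2, let G ⊆ R_k, and let M = {α_1,…,α_n} ⊆ E_k^h. Then the h-ary predicate ρ_{M,G} = { f(α_1,…,α_n) : f ∈ Pol(G) of arity n } belongs to [G]. -/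
theorem rho_MG_mem_ppClosure (k h n : ℕ) (hk : 2 ≤ k) (G : Set (Pred k))
    (α : Fin n → Tuple k h) :
    (⟨h, { t | ∃ f : Tuple k n → Fin k,
        (∀ ρ ∈ G, Preserves f ρ) ∧ t = fun j => f fun i => α i j }⟩ : Pred k)
      ∈ ppClosure k G := by
  classical
  haveI : Nonempty (Fin k) := ⟨⟨0, by omega⟩⟩
  set l := Fintype.card (Tuple k n) with hldef
  have hl : 0 < l := Fintype.card_pos
  let e : Fin l ≃ Tuple k n := (Fintype.equivFin (Tuple k n)).symm
  set N := Fintype.card (Tuple k n → Fin k) with hNdef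
  let eF : Fin N ≃ (Tuple k n → Fin k) := (Fintype.equivFin _).symm
  let Good : (Tuple k n → Fin k) → Prop := fun f => ∀ ρ ∈ G, Preserves f ρ
  have hbad : ∀ f, ¬ Good f → ∃ ρ, ρ ∈ G ∧ ∃ β : Fin n → Tuple k ρ.1,
      (∀ i, β i ∈ ρ.2) ∧ (fun j => f fun i => β i j) ∉ ρ.2 := by
    intro f hf
    simp only [Good, not_forall] at hf
    obtain ⟨ρ, hρG, hρ⟩ := hf
    unfold Preserves at hρ
    push_neg at hρ
    obtain ⟨β, h1, h2⟩ := hρ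
    exact ⟨ρ, hρG, β, h1, h2⟩
  let ρb : ∀ f, ¬Good f → Pred k := fun f hf => (hbad f hf).choose
  have hρbG : ∀ f hf, ρb f hf ∈ G := fun f hf => (hbad f hf).choose_spec.1
  let βb : ∀ f hf, Fin n → Tuple k (ρb f hf).1 :=
    fun f hf => (hbad f hf).choose_spec.2.choose
  have hβb : ∀ f hf, (∀ i, βb f hf i ∈ (ρb f hf).2) ∧
      (fun j => f fun i => βb f hf i j) ∉ (ρb f hf).2 :=
    fun f hf => (hbad f hf).choose_spec.2.choose_spec
  let colv : Tuple k n → Fin (h + l) := fun β => Fin.natAdd h (e.symm β)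
  let cL : Fin h → Σ ρ : Pred k, Fin ρ.1 → Fin (h + l) :=
    fun j => ⟨eqPred k, ![Fin.castAdd l j, colv (fun i => α i j)]⟩
  let cR : Fin N → Σ ρ : Pred k, Fin ρ.1 → Fin (h + l) :=
    fun i => if hg : Good (eF i) then
        ⟨eqPred k, fun _ => Fin.natAdd h ⟨0, hl⟩⟩
      else
        ⟨ρb (eF i) hg, fun j => colv (fun i' => βb (eF i) hg i' j)⟩
  let c : Fin (h + N) → Σ ρ : Pred k, Fin ρ.1 → Fin (h + l) := Fin.addCases cL cR
  have hL : ∀ j : Fin h, c (Fin.castAdd N j) = cL j := fun j => Fin.addCases_left j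
  have hR : ∀ i : Fin N, c (Fin.natAdd h i) = cR i := fun i => Fin.addCases_right i
  have hP : ∀ (u : Tuple k h) (y : Tuple k l)
      (d d' : Σ ρ : Pred k, Fin ρ.1 → Fin (h + l)), d = d' →
      (((fun j1 => Fin.append u y (d.2 j1)) ∈ d.1.2) ↔
        ((fun j1 => Fin.append u y (d'.2 j1)) ∈ d'.1.2)) := by
    rintro u y d d' rfl; rfl
  refine ⟨l, h + N, fun i => (c i).1, fun i => (c i).2, ?_, ?_⟩
  · intro i
    refine Fin.addCases (fun j => ?_) (fun i => ?_) i
    · simp only [hL]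
      right; left; rfl
    · simp only [hR, cR]
      by_cases hg : Good (eF i)
      · rw [dif_pos hg]; right; left; rfl
      · rw [dif_neg hg]; left; exact hρbG (eF i) hg
  · intro x
    constructor
    · rintro ⟨f, hfG, hx⟩
      refine ⟨fun b => f (e b), ?_⟩
      intro i
      show (fun j1 => Fin.append x (fun b => f (e b)) ((c i).2 j1)) ∈ (c i).1.2
      refine Fin.addCases (fun j => ?_) (fun i => ?_) i
      · refine (hP _ _ _ _ (hL j)).mpr ?_
        show Fin.append x (fun b => f (e b)) (Fin.castAdd l j) =
          Fin.append x (fun b => f (e b)) (colv (fun i => α i j))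
        simp only [cL, eqPred, Set.mem_setOf_eq,
          Matrix.cons_val_zero, Matrix.cons_val_one, Matrix.head_cons, colv,
          Fin.append_left, Fin.append_right, Equiv.apply_symm_apply]
        rw [hx]
      · by_cases hg : Good (eF i)
        · refine (hP _ _ _ _ ((hR i).trans (dif_pos hg))).mpr ?_
          simp [eqPred]
          exact rfl
        · refine (hP _ _ _ _ ((hR i).trans (dif_neg hg))).mpr ?_
          have := hfG (ρb (eF i) hg) (hρbG (eF i) hg) (βb (eF i) hg)
            (hβb (eF i) hg).1
          simpa only [colv, Fin.append_right, Equiv.apply_symm_apply] using this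
    · rintro ⟨y, hy⟩
      set f : Tuple k n → Fin k := fun β => y (e.symm β) with hfdef
      have hGood : Good f := by
        by_contra hg
        have hEF : eF (eF.symm f) = f := eF.apply_symm_apply f
        have hg' : ¬ Good (eF (eF.symm f)) := by rw [hEF]; exact hg
        have hcon := (hP x y _ _ ((hR (eF.symm f)).trans (dif_neg hg'))).mp
          (hy (Fin.natAdd h (eF.symm f)))
        simp only [colv, Fin.append_right] at hcon
        have heq : (fun j => y (e.symm fun i' => βb (eF (eF.symm f)) hg' i' j))
            = (fun j => (eF (eF.symm f)) fun i' => βb (eF (eF.symm f)) hg' i' j) := by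
          funext j
          exact (congrFun hEF _).symm
        rw [heq] at hcon
        exact (hβb (eF (eF.symm f)) hg').2 hcon
      refine ⟨f, hGood, ?_⟩
      funext j
      have hcon0 := (hP x y _ _ (hL j)).mp (hy (Fin.castAdd N j))
      have hcon : Fin.append x y (Fin.castAdd l j) = Fin.append x y (colv fun i => α i j) := hcon0
      simp only [cL, eqPred, Set.mem_setOf_eq,
        Matrix.cons_val_zero, Matrix.cons_val_one, Matrix.head_cons, colv,
        Fin.append_left, Fin.append_right] at hcon
      exact hcon
end

section
/- Let k ≥ 2 and G ⊆ R_k with [G] ∩ R̃_k finite. Let ρ ∈ MAX(G) be n-ary and ρ' ∈ [G] with ρ(x_1,…,x_n) = ρ'(x_1,…,x_1, x_2,…,x_2, …, x_n,…,x_n) where x_j is repeated m_j times. Then there exist indices i_1,…,i_n such that ρ(x_1,…,x_n) = ∃t_1∃t_2…∃t_l ρ'(z_{1,1},…,z_{1,m_1},…,z_{n,1},…,z_{n,m_n}), where z_{j,i_j} = x_j for every j, all the variables z_{i,j} are pairwise distinct, and the remaining z_{i,j} are the bound variables t_1,…,t_l. In particular, ρ ∈ Strike(ρ'). -/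
def predLE (k : ℕ) (ρ σ : Pred k) : Prop :=
  ∃ h : ρ.1 = σ.1, ∀ x : Tuple k σ.1, (fun i => x (Fin.cast h i)) ∈ ρ.2 → x ∈ σ.2

def MAXset (k : ℕ) (G : Set (Pred k)) : Set (Pred k) :=
  { ρ | ρ ∈ ppClosure k G ∧ Essential k ρ ∧
      (∀ σ ∈ ppClosure k G, Essential k σ → σ.1 ≤ ρ.1) ∧
      (∀ σ ∈ ppClosure k G, Essential k σ → predLE k ρ σ → ρ = σ) }

section MaxIdentHelpers
variable {k : ℕ}

private lemma castAdd_ne_natAdd' {a b : ℕ} (i : Fin a) (t : Fin b) :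
    Fin.castAdd b i ≠ Fin.natAdd a t := by
  intro h
  have h1 : (i : ℕ) < a := i.isLt
  have h2 := congrArg Fin.val h
  simp only [Fin.coe_castAdd, Fin.coe_natAdd] at h2
  omega

private lemma castAdd_inj' {a b : ℕ} {i j : Fin a} (h : Fin.castAdd b i = Fin.castAdd b j) :
    i = j := by
  apply Fin.ext
  simpa using congrArg Fin.val h

private lemma natAdd_inj' {a b : ℕ} {i j : Fin b} (h : Fin.natAdd a i = Fin.natAdd a j) :
    i = j := by
  apply Fin.ext
  have h2 := congrArg Fin.val h
  simp only [Fin.coe_natAdd] at h2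
  omega

private def emb (n l : ℕ) : Fin n ⊕ Fin l → Fin (n + l) :=
  Sum.elim (Fin.castAdd l) (Fin.natAdd n)

private lemma append_emb {n l : ℕ} (x : Tuple k n) (y : Tuple k l) (c : Fin n ⊕ Fin l) :
    Fin.append x y (emb n l c) = Sum.elim x y c := by
  cases c with
  | inl a => simp [emb, Fin.append_left]
  | inr b => simp [emb, Fin.append_right]

private lemma emb_inj {n l : ℕ} : Function.Injective (emb n l) := by
  intro c d h
  simp only [emb] at h
  cases c with
  | inl a =>
    cases d with
    | inl b => exact congrArg Sum.inl (castAdd_inj' h)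
    | inr b => exact absurd h (castAdd_ne_natAdd' a b)
  | inr a =>
    cases d with
    | inl b => exact absurd h.symm (castAdd_ne_natAdd' b a)
    | inr b => exact congrArg Sum.inr (natAdd_inj' h)

private lemma nonEss_closure {m : ℕ} {S : Set (Tuple k m)}
    (h : ¬ Essential k ⟨m, S⟩) {v : Tuple k m}
    (hv : ∀ i, ∃ s, Function.update v i s ∈ S) : v ∈ S := by
  have h' : (⟨m, S⟩ : Pred k) ∈ andClosure k {σ : Pred k | σ.1 < m} := not_not.mp h
  obtain ⟨s, σ, z, hσ, hinj, hiff⟩ := h'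
  apply (hiff v).mpr
  intro t
  have hlt : (σ t).1 < m := hσ t
  have hex : ∃ i : Fin m, ∀ jj, z t jj ≠ i := by
    by_contra hcon
    push_neg at hcon
    have hsur : Function.Surjective (z t) := hcon
    have := Fintype.card_le_of_surjective (z t) hsur
    simp only [Fintype.card_fin] at this
    omega
  obtain ⟨i, hi⟩ := hex
  obtain ⟨s', hs'⟩ := hv i
  have ht := (hiff _).mp hs' t
  have heq : (fun jj => v (z t jj)) = (fun jj => Function.update v i s' (z t jj)) := by
    funext jj
    rw [Function.update_of_ne (hi jj)]
  rw [heq]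
  exact ht

private lemma closure_nonEss {m : ℕ} {S : Set (Tuple k m)}
    (h : ∀ v : Tuple k m, (∀ i, ∃ s, Function.update v i s ∈ S) → v ∈ S) :
    ¬ Essential k ⟨m, S⟩ := by
  intro he
  apply he
  show (⟨m, S⟩ : Pred k) ∈ andClosure k _
  cases m with
  | zero =>
    exact ⟨0, Fin.elim0, fun t => t.elim0, fun t => t.elim0, fun t => t.elim0,
      fun x => ⟨fun _ t => t.elim0, fun _ => h x (fun i => i.elim0)⟩⟩
  | succ m' =>
    refine ⟨m' + 1, fun i => ⟨m', {u : Tuple k m' | ∃ s, Fin.insertNth i s u ∈ S}⟩,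
      fun i => i.succAbove, fun i => Nat.lt_succ_self m',
      fun i => Fin.succAbove_right_injective, fun x => ?_⟩
    constructor
    · intro hx i
      refine ⟨x i, ?_⟩
      have heq : Fin.insertNth i (x i) (fun jj => x (i.succAbove jj)) = x := by
        funext r
        refine Fin.succAboveCases i ?_ (fun jj => ?_) r
        · rw [Fin.insertNth_apply_same]
        · rw [Fin.insertNth_apply_succAbove]
      rw [heq]
      exact hx
    · intro hx
      apply h
      intro i
      obtain ⟨s, hs⟩ := hx i
      refine ⟨s, ?_⟩
      have heq : Function.update x i s = Fin.insertNth i s (fun jj => x (i.succAbove jj)) := by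
        funext r
        refine Fin.succAboveCases i ?_ (fun jj => ?_) r
        · rw [Function.update_self, Fin.insertNth_apply_same]
        · rw [Function.update_of_ne (Fin.succAbove_ne i jj), Fin.insertNth_apply_succAbove]
      rw [heq]
      exact hs

private lemma ppSubstSum {M : ℕ} {G : Set (Pred k)} {R' : Set (Tuple k M)}
    (hmem : (⟨M, R'⟩ : Pred k) ∈ ppClosure k G) (N L : ℕ) (g : Fin M → Fin N ⊕ Fin L) :
    (⟨N, {x : Tuple k N | ∃ y : Tuple k L, (fun i => Sum.elim x y (g i)) ∈ R'}⟩ : Pred k)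
      ∈ ppClosure k G := by
  obtain ⟨l₀, s, σa, z, hσ, hiff⟩ := hmem
  classical
  set conv : Fin (M + l₀) → Fin (N + (L + l₀)) :=
    Fin.addCases
      (fun i => Sum.elim (fun a => Fin.castAdd (L + l₀) a)
        (fun b => Fin.natAdd N (Fin.castAdd l₀ b)) (g i))
      (fun u => Fin.natAdd N (Fin.natAdd L u)) with hconvdef
  have hconv : ∀ (x : Tuple k N) (y : Tuple k L) (u : Tuple k l₀) (r : Fin (M + l₀)),
      Fin.append x (Fin.append y u) (conv r)
        = Fin.append (fun i => Sum.elim x y (g i)) u r := by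
    intro x y u r
    refine Fin.addCases (fun i => ?_) (fun v => ?_) r
    · rw [hconvdef]
      simp only [Fin.addCases_left, Fin.append_left]
      cases hgi : g i with
      | inl a => simp [Fin.append_left]
      | inr b => simp [Fin.append_right, Fin.append_left]
    · rw [hconvdef]
      simp only [Fin.addCases_right, Fin.append_right]
  refine ⟨L + l₀, s, σa, fun t jj => conv (z t jj), hσ, fun x => ?_⟩
  constructor
  · rintro ⟨y, hy⟩
    obtain ⟨u, hu⟩ := (hiff _).mp hy
    refine ⟨Fin.append y u, fun t => ?_⟩
    have heq : (fun jj => Fin.append x (Fin.append y u) (conv (z t jj)))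
        = (fun jj => Fin.append (fun i => Sum.elim x y (g i)) u (z t jj)) :=
      funext fun jj => hconv x y u (z t jj)
    rw [heq]
    exact hu t
  · rintro ⟨Y, hY⟩
    refine ⟨fun b => Y (Fin.castAdd l₀ b), ?_⟩
    apply (hiff _).mpr
    refine ⟨fun v => Y (Fin.natAdd L v), fun t => ?_⟩
    have hYsplit : Fin.append (fun b => Y (Fin.castAdd l₀ b)) (fun v => Y (Fin.natAdd L v)) = Y := by
      funext r
      refine Fin.addCases (fun b => ?_) (fun v => ?_) r
      · rw [Fin.append_left]
      · rw [Fin.append_right]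
    have heq := funext fun jj =>
      hconv x (fun b => Y (Fin.castAdd l₀ b)) (fun v => Y (Fin.natAdd L v)) (z t jj)
    rw [hYsplit] at heq
    rw [← heq]
    exact hY t

private lemma sigma_snd_eq {n : ℕ} {A B : Set (Tuple k n)}
    (h : (⟨n, A⟩ : Pred k) = ⟨n, B⟩) : A = B := by
  simpa using h

/-- the index map after striking coordinate `p₀` (which moves to a fresh bound variable) -/
private def gp {n l M : ℕ} (f : Fin M → Fin n ⊕ Fin l) (p₀ : Fin M) (i : Fin M) :
    Fin n ⊕ Fin (l + 1) :=
  if i = p₀ then Sum.inr (Fin.last l) else Sum.map id Fin.castSucc (f i)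

/-- the index map of the auxiliary predicate ζ -/
private def gz {n l M m : ℕ} [DecidableEq (Fin n ⊕ Fin l)]
    (f : Fin M → Fin n ⊕ Fin l) (j : Fin n) (q : Fin M)
    (E : Finset (Fin M)) (eF : {i // i ∈ E} ≃ Fin m) (i : Fin M) : Fin (n + m) ⊕ Fin l :=
  if i = q then Sum.inl (Fin.castAdd m j)
  else if h : i ∈ E then Sum.inl (Fin.natAdd n (eF ⟨i, h⟩))
  else Sum.map (Fin.castAdd m) id (f i)

end MaxIdentHelpers

section MaxIdentStep
variable {k : ℕ}

private lemma step {M n : ℕ} {G : Set (Pred k)} {R : Set (Tuple k n)} {R' : Set (Tuple k M)}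
    (hmax : (⟨n, R⟩ : Pred k) ∈ MAXset k G)
    (hmem : (⟨M, R'⟩ : Pred k) ∈ ppClosure k G)
    {xs : Tuple k n} (hxs1 : xs ∉ R) (hxs2 : ∀ i, ∃ s, Function.update xs i s ∈ R)
    {l : ℕ} {f : Fin M → Fin n ⊕ Fin l}
    (inv3 : ∀ x : Tuple k n, x ∈ R ↔ ∃ y : Tuple k l, (fun i => Sum.elim x y (f i)) ∈ R')
    {j : Fin n} {p q : Fin M} (hpq : p ≠ q) (hp : f p = Sum.inl j) (hq : f q = Sum.inl j) :
    ∃ p₀, f p₀ = Sum.inl j ∧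
      (∀ x : Tuple k n, x ∈ R ↔ ∃ Y : Tuple k (l + 1),
        (fun i => Sum.elim x Y (gp f p₀ i)) ∈ R') := by
  classical
  have hgpq : ∀ p₀ : Fin M, gp f p₀ p₀ = Sum.inr (Fin.last l) := by
    intro p₀; simp [gp]
  have hgpo : ∀ (p₀ i' : Fin M), i' ≠ p₀ → gp f p₀ i' = Sum.map id Fin.castSucc (f i') := by
    intro p₀ i' h; simp [gp, h]
  -- R is contained in each split predicate
  have hRsub : ∀ p₀ : Fin M, f p₀ = Sum.inl j → ∀ x ∈ R,
      ∃ Y : Tuple k (l + 1), (fun i => Sum.elim x Y (gp f p₀ i)) ∈ R' := by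
    intro p₀ hp₀ x hx
    obtain ⟨y, hy⟩ := (inv3 x).mp hx
    refine ⟨Fin.snoc y (x j), ?_⟩
    have heq : (fun i => Sum.elim x (Fin.snoc y (x j) : Tuple k (l + 1)) (gp f p₀ i))
        = fun i => Sum.elim x y (f i) := by
      funext i
      by_cases hi : i = p₀
      · rw [hi, hgpq, hp₀]
        simp [Fin.snoc_last]
      · rw [hgpo p₀ i hi]
        cases hfi : f i with
        | inl a => simp
        | inr b => simp [Fin.snoc_castSucc]
    rw [heq]
    exact hy
  by_cases hgood : ∃ p₀, f p₀ = Sum.inl j ∧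
      {x : Tuple k n | ∃ Y : Tuple k (l + 1), (fun i => Sum.elim x Y (gp f p₀ i)) ∈ R'} = R
  · obtain ⟨p₀, hp₀, hSet⟩ := hgood
    refine ⟨p₀, hp₀, fun x => ⟨fun hx => hRsub p₀ hp₀ x hx, fun hx => hSet ▸ hx⟩⟩
  · exfalso
    push_neg at hgood
    -- each split predicate absorbs xs
    have hxin : ∀ p₀, f p₀ = Sum.inl j →
        ∃ Y : Tuple k (l + 1), (fun i => Sum.elim xs Y (gp f p₀ i)) ∈ R' := by
      intro p₀ hp₀
      have hne := hgood p₀ hp₀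
      have hpp := ppSubstSum hmem n (l + 1) (gp f p₀)
      have hness : ¬ Essential k ⟨n,
          {x : Tuple k n | ∃ Y : Tuple k (l + 1), (fun i => Sum.elim x Y (gp f p₀ i)) ∈ R'}⟩ := by
        intro hess
        have hle : predLE k (⟨n, R⟩ : Pred k)
            ⟨n, {x : Tuple k n | ∃ Y : Tuple k (l + 1), (fun i => Sum.elim x Y (gp f p₀ i)) ∈ R'}⟩ := by
          refine ⟨rfl, fun x hx => hRsub p₀ hp₀ x ?_⟩
          have hxx : (fun i => x (Fin.cast rfl i)) = x := rfl
          rw [hxx] at hx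
          exact hx
        have heq := hmax.2.2.2 _ hpp hess hle
        exact hne (sigma_snd_eq heq).symm
      exact nonEss_closure hness (fun i => (hxs2 i).imp (fun s hs => hRsub p₀ hp₀ _ hs))
    -- set up the class and the auxiliary predicate ζ
    set B : Finset (Fin M) := Finset.univ.filter (fun i => f i = Sum.inl j) with hBdef
    set E : Finset (Fin M) := B.erase q with hEdef
    have hEmem : ∀ i, i ∈ E ↔ (i ≠ q ∧ f i = Sum.inl j) := by
      intro i
      simp [hEdef, hBdef, Finset.mem_erase, Finset.mem_filter]
    have hpE : p ∈ E := (hEmem p).mpr ⟨hpq, hp⟩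
    set m := E.card with hmdef
    have hm1 : 0 < m := Finset.card_pos.mpr ⟨p, hpE⟩
    set eF : {i // i ∈ E} ≃ Fin m := E.equivFin with heFdef
    -- computation rules for gz
    have hgzq : gz f j q E eF q = Sum.inl (Fin.castAdd m j) := by simp [gz]
    have hgzE : ∀ (i' : Fin M) (h2 : i' ∈ E), i' ≠ q →
        gz f j q E eF i' = Sum.inl (Fin.natAdd n (eF ⟨i', h2⟩)) := by
      intro i' h2 h1; simp [gz, h1, h2]
    have hgzo : ∀ i' : Fin M, i' ≠ q → i' ∉ E →
        gz f j q E eF i' = Sum.map (Fin.castAdd m) id (f i') := by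
      intro i' h1 h2; simp [gz, h1, h2]
    have hZpp := ppSubstSum hmem (n + m) l (gz f j q E eF)
    have hZness : ¬ Essential k ⟨n + m,
        {v : Tuple k (n + m) | ∃ y : Tuple k l,
          (fun i => Sum.elim v y (gz f j q E eF i)) ∈ R'}⟩ := by
      intro hess
      have h2 : n + m ≤ n := hmax.2.2.1 _ hZpp hess
      omega
    -- closure of ζ at the point (xs, xs j, ..., xs j)
    have hcl : ∀ r : Fin (n + m), ∃ s,
        Function.update (Fin.append xs (fun _ => xs j)) r s ∈
          {v : Tuple k (n + m) | ∃ y : Tuple k l,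
            (fun i => Sum.elim v y (gz f j q E eF i)) ∈ R'} := by
      intro r
      refine Fin.addCases (motive := fun r => ∃ s,
        Function.update (Fin.append xs (fun _ => xs j)) r s ∈
          {v : Tuple k (n + m) | ∃ y : Tuple k l,
            (fun i => Sum.elim v y (gz f j q E eF i)) ∈ R'}) (fun i => ?_) (fun t => ?_) r
      · by_cases hij : i = j
        · -- slot j : use the split at q
          rw [hij]
          obtain ⟨Y, hY⟩ := hxin q hq
          refine ⟨Y (Fin.last l), ⟨fun b => Y b.castSucc, ?_⟩⟩
          have heq : (fun i' => Sum.elim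
                (Function.update (Fin.append xs (fun _ => xs j)) (Fin.castAdd m j) (Y (Fin.last l)))
                (fun b => Y b.castSucc) (gz f j q E eF i'))
              = fun i' => Sum.elim xs Y (gp f q i') := by
            funext i'
            by_cases h1 : i' = q
            · rw [h1, hgzq, hgpq]
              simp [Function.update_self]
            · by_cases h2 : i' ∈ E
              · have hfi' : f i' = Sum.inl j := ((hEmem i').mp h2).2
                rw [hgzE i' h2 h1, hgpo q i' h1, hfi']
                simp only [Sum.map_inl, id_eq, Sum.elim_inl]
                rw [Function.update_of_ne (Ne.symm (castAdd_ne_natAdd' j _))]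
                simp [Fin.append_right]
              · rw [hgzo i' h1 h2, hgpo q i' h1]
                cases hfi : f i' with
                | inl a =>
                  have haj : a ≠ j := fun hc => h2 ((hEmem i').mpr ⟨h1, by rw [hfi, hc]⟩)
                  simp only [Sum.map_inl, id_eq, Sum.elim_inl]
                  rw [Function.update_of_ne (fun hc => haj (castAdd_inj' hc))]
                  simp [Fin.append_left]
                | inr b =>
                  simp only [Sum.map_inr, id_eq, Sum.elim_inr]
          rw [heq]
          exact hY
        · -- slot i ≠ j : use that xs is in all liftings of R
          obtain ⟨s, hs⟩ := hxs2 i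
          obtain ⟨y, hy⟩ := (inv3 _).mp hs
          refine ⟨s, ⟨y, ?_⟩⟩
          have heq : (fun i' => Sum.elim
                (Function.update (Fin.append xs (fun _ => xs j)) (Fin.castAdd m i) s)
                y (gz f j q E eF i'))
              = fun i' => Sum.elim (Function.update xs i s) y (f i') := by
            funext i'
            by_cases h1 : i' = q
            · rw [h1, hgzq, hq]
              simp only [Sum.elim_inl]
              rw [Function.update_of_ne (fun hc => hij (castAdd_inj' hc).symm),
                Function.update_of_ne (Ne.symm hij)]
              simp [Fin.append_left]
            · by_cases h2 : i' ∈ E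
              · have hfi' : f i' = Sum.inl j := ((hEmem i').mp h2).2
                rw [hgzE i' h2 h1, hfi']
                simp only [Sum.elim_inl]
                rw [Function.update_of_ne (Ne.symm (castAdd_ne_natAdd' i _)),
                  Function.update_of_ne (Ne.symm hij)]
                simp [Fin.append_right]
              · rw [hgzo i' h1 h2]
                cases hfi : f i' with
                | inl a =>
                  simp only [Sum.map_inl, id_eq, Sum.elim_inl]
                  by_cases hai : a = i
                  · rw [hai]
                    rw [Function.update_self, Function.update_self]
                  · rw [Function.update_of_ne (fun hc => hai (castAdd_inj' hc)),
                      Function.update_of_ne hai]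
                    simp [Fin.append_left]
                | inr b => simp
          rw [heq]
          exact hy
      · -- slots of the fresh coordinates
        have hp₀E : ((eF.symm t : {i // i ∈ E}) : Fin M) ∈ E := (eF.symm t).2
        have hp₀q : ((eF.symm t : {i // i ∈ E}) : Fin M) ≠ q := ((hEmem _).mp hp₀E).1
        have hfp₀ : f ((eF.symm t : {i // i ∈ E}) : Fin M) = Sum.inl j := ((hEmem _).mp hp₀E).2
        obtain ⟨Y, hY⟩ := hxin _ hfp₀
        refine ⟨Y (Fin.last l), ⟨fun b => Y b.castSucc, ?_⟩⟩
        have heq : (fun i' => Sum.elim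
              (Function.update (Fin.append xs (fun _ => xs j)) (Fin.natAdd n t) (Y (Fin.last l)))
              (fun b => Y b.castSucc) (gz f j q E eF i'))
            = fun i' => Sum.elim xs Y (gp f ((eF.symm t : {i // i ∈ E}) : Fin M) i') := by
          funext i'
          by_cases h1 : i' = q
          · rw [h1, hgzq, hgpo _ q (Ne.symm hp₀q), hq]
            simp only [Sum.map_inl, id_eq, Sum.elim_inl]
            rw [Function.update_of_ne (castAdd_ne_natAdd' j t)]
            simp [Fin.append_left]
          · by_cases h2 : i' ∈ E
            · by_cases h3 : i' = ((eF.symm t : {i // i ∈ E}) : Fin M)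
              · rw [h3, hgzE _ hp₀E hp₀q, hgpq]
                have hidx : eF ⟨((eF.symm t : {i // i ∈ E}) : Fin M), hp₀E⟩ = t := by
                  have hsub : (⟨((eF.symm t : {i // i ∈ E}) : Fin M), hp₀E⟩ : {i // i ∈ E})
                      = eF.symm t := Subtype.ext rfl
                  rw [hsub, Equiv.apply_symm_apply]
                rw [hidx]
                simp [Function.update_self]
              · have hfi' : f i' = Sum.inl j := ((hEmem i').mp h2).2
                rw [hgzE i' h2 h1, hgpo _ i' h3, hfi']
                simp only [Sum.map_inl, id_eq, Sum.elim_inl]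
                have hne : Fin.natAdd n (eF ⟨i', h2⟩) ≠ Fin.natAdd n t := by
                  intro hc
                  apply h3
                  have h4 : eF ⟨i', h2⟩ = t := natAdd_inj' hc
                  have h5 : (⟨i', h2⟩ : {i // i ∈ E}) = eF.symm t := by
                    rw [← h4, Equiv.symm_apply_apply]
                  exact congrArg Subtype.val h5
                rw [Function.update_of_ne hne]
                simp [Fin.append_right]
            · have h3 : i' ≠ ((eF.symm t : {i // i ∈ E}) : Fin M) := by
                intro hc; exact h2 (hc ▸ hp₀E)
              rw [hgzo i' h1 h2, hgpo _ i' h3]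
              cases hfi : f i' with
              | inl a =>
                simp only [Sum.map_inl, id_eq, Sum.elim_inl]
                rw [Function.update_of_ne (castAdd_ne_natAdd' a t)]
                simp [Fin.append_left]
              | inr b => simp
        rw [heq]
        exact hY
    -- conclude xs ∈ R, contradiction
    obtain ⟨y, hy⟩ := nonEss_closure hZness hcl
    apply hxs1
    apply (inv3 xs).mpr
    refine ⟨y, ?_⟩
    have heq : (fun i' => Sum.elim xs y (f i'))
        = fun i' => Sum.elim (Fin.append xs (fun _ => xs j)) y (gz f j q E eF i') := by
      funext i'
      by_cases h1 : i' = q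
      · rw [h1, hgzq, hq]
        simp [Fin.append_left]
      · by_cases h2 : i' ∈ E
        · have hfi' : f i' = Sum.inl j := ((hEmem i').mp h2).2
          rw [hgzE i' h2 h1, hfi']
          simp [Fin.append_right]
        · rw [hgzo i' h1 h2]
          cases hfi : f i' with
          | inl a => simp [Fin.append_left]
          | inr b => simp
    rw [heq]
    exact hy

end MaxIdentStep

section MaxIdentFinal
variable {k : ℕ}

private lemma terminal {M n : ℕ} {R : Set (Tuple k n)} {R' : Set (Tuple k M)}
    (blk : Fin M → Fin n) {l : ℕ} {f : Fin M → Fin n ⊕ Fin l}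
    (inv1 : ∀ i j, f i = Sum.inl j → blk i = j)
    (inv2 : ∀ b, ∃! i, f i = Sum.inr b)
    (inv4 : ∀ j, ∃ i, f i = Sum.inl j)
    (inv3 : ∀ x : Tuple k n, x ∈ R ↔ ∃ y : Tuple k l, (fun i => Sum.elim x y (f i)) ∈ R')
    (nodup : ∀ (jj : Fin n) (a b : Fin M), f a = Sum.inl jj → f b = Sum.inl jj → a = b) :
    ∃ ι : Fin n → Fin M,
      (∀ j, blk (ι j) = j) ∧
      (∀ x : Tuple k n, x ∈ R ↔ ∃ w ∈ R', ∀ j, w (ι j) = x j) ∧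
      (⟨n, R⟩ : Pred k) ∈ strike k ⟨M, R'⟩ := by
  classical
  have finj : Function.Injective f := by
    intro a b hab
    cases hfa : f a with
    | inl ja =>
      cases hfb : f b with
      | inl jb =>
        rw [hfa, hfb] at hab
        have : ja = jb := by simpa using hab
        exact nodup ja a b hfa (this ▸ hfb)
      | inr bb => rw [hfa, hfb] at hab; simp at hab
    | inr ba =>
      cases hfb : f b with
      | inl jb => rw [hfa, hfb] at hab; simp at hab
      | inr bb =>
        rw [hfa, hfb] at hab
        have : ba = bb := by simpa using hab
        exact (inv2 bb).unique (this ▸ hfa) hfb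
  choose ι hι using inv4
  choose gb hgb using fun b => (inv2 b).exists
  refine ⟨ι, fun j => inv1 _ j (hι j), ?_, ?_⟩
  · intro x
    constructor
    · intro hx
      obtain ⟨y, hy⟩ := (inv3 x).mp hx
      refine ⟨_, hy, fun j => ?_⟩
      simp only [hι j, Sum.elim_inl]
    · rintro ⟨w, hw, hwι⟩
      apply (inv3 x).mpr
      refine ⟨fun b => w (gb b), ?_⟩
      have heq : (fun i => Sum.elim x (fun b => w (gb b)) (f i)) = w := by
        funext i
        cases hfi : f i with
        | inl jj =>
          have hii : i = ι jj := nodup jj i (ι jj) hfi (hι jj)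
          simp only [Sum.elim_inl]
          rw [hii]
          exact (hwι jj).symm
        | inr b =>
          have hii : i = gb b := (inv2 b).unique hfi (hgb b)
          simp only [Sum.elim_inr]
          rw [hii]
      rw [heq]
      exact hw
  · refine ⟨l, fun i => emb n l (f i), emb_inj.comp finj, fun x => ?_⟩
    have haux : ∀ y : Tuple k l,
        (fun i => Fin.append x y (emb n l (f i))) = fun i => Sum.elim x y (f i) :=
      fun y => funext fun i => append_emb x y (f i)
    constructor
    · intro hx
      obtain ⟨y, hy⟩ := (inv3 x).mp hx
      exact ⟨y, (haux y).symm ▸ hy⟩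
    · rintro ⟨y, hy⟩
      exact (inv3 x).mpr ⟨y, (haux y) ▸ hy⟩

private lemma key {M n : ℕ} {G : Set (Pred k)} {R : Set (Tuple k n)} {R' : Set (Tuple k M)}
    (blk : Fin M → Fin n)
    (hmax : (⟨n, R⟩ : Pred k) ∈ MAXset k G)
    (hmem : (⟨M, R'⟩ : Pred k) ∈ ppClosure k G)
    {xs : Tuple k n} (hxs1 : xs ∉ R) (hxs2 : ∀ i, ∃ s, Function.update xs i s ∈ R) :
    ∀ (c l : ℕ) (f : Fin M → Fin n ⊕ Fin l),
      ((Finset.univ.filter (fun i => (f i).isLeft)).card ≤ c) →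
      (∀ i j, f i = Sum.inl j → blk i = j) →
      (∀ b, ∃! i, f i = Sum.inr b) →
      (∀ j, ∃ i, f i = Sum.inl j) →
      (∀ x : Tuple k n, x ∈ R ↔ ∃ y : Tuple k l, (fun i => Sum.elim x y (f i)) ∈ R') →
      ∃ ι : Fin n → Fin M,
        (∀ j, blk (ι j) = j) ∧
        (∀ x : Tuple k n, x ∈ R ↔ ∃ w ∈ R', ∀ j, w (ι j) = x j) ∧
        (⟨n, R⟩ : Pred k) ∈ strike k ⟨M, R'⟩ := by
  classical
  intro c
  induction c with
  | zero =>
    intro l f hc inv1 inv2 inv4 inv3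
    refine terminal blk inv1 inv2 inv4 inv3 ?_
    intro jj a b hfa hfb
    by_contra hab
    have ha : a ∈ Finset.univ.filter (fun i => (f i).isLeft) := by
      simp [Finset.mem_filter, hfa]
    have : 0 < (Finset.univ.filter (fun i => (f i).isLeft)).card :=
      Finset.card_pos.mpr ⟨a, ha⟩
    omega
  | succ c ih =>
    intro l f hc inv1 inv2 inv4 inv3
    by_cases hdup : ∃ (j : Fin n) (p q : Fin M), p ≠ q ∧ f p = Sum.inl j ∧ f q = Sum.inl j
    · obtain ⟨j, p, q, hpq, hp, hq⟩ := hdup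
      obtain ⟨p₀, hp₀, hstep⟩ := step hmax hmem hxs1 hxs2 inv3 hpq hp hq
      have hgpq : gp f p₀ p₀ = Sum.inr (Fin.last l) := by simp [gp]
      have hgpo : ∀ i' : Fin M, i' ≠ p₀ → gp f p₀ i' = Sum.map id Fin.castSucc (f i') := by
        intro i' h; simp [gp, h]
      -- pick another class member distinct from p₀
      have hq₀ : ∃ q₀, q₀ ≠ p₀ ∧ f q₀ = Sum.inl j := by
        by_cases hpp₀ : p = p₀
        · exact ⟨q, fun hc => hpq (hpp₀.trans hc.symm), hq⟩
        · exact ⟨p, hpp₀, hp⟩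
      obtain ⟨q₀, hq₀p, hq₀⟩ := hq₀
      apply ih (l + 1) (gp f p₀)
      · -- cardinality decreases
        have hfe : Finset.univ.filter (fun i => ((gp f p₀ i).isLeft : Prop))
            = (Finset.univ.filter (fun i => ((f i).isLeft : Prop))).erase p₀ := by
          ext i
          simp only [Finset.mem_filter, Finset.mem_erase, Finset.mem_univ, true_and]
          constructor
          · intro hi
            have hip : i ≠ p₀ := by
              intro hc
              rw [hc, hgpq] at hi
              simp at hi
            refine ⟨hip, ?_⟩
            rw [hgpo i hip] at hi
            cases hfi : f i with
            | inl a => simp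
            | inr b => rw [hfi] at hi; simp at hi
          · rintro ⟨hip, hi⟩
            rw [hgpo i hip]
            cases hfi : f i with
            | inl a => simp
            | inr b => rw [hfi] at hi; simp at hi
        rw [hfe]
        have hp₀mem : p₀ ∈ Finset.univ.filter (fun i => ((f i).isLeft : Prop)) := by
          simp [Finset.mem_filter, hp₀]
        rw [Finset.card_erase_of_mem hp₀mem]
        have h1 : 0 < (Finset.univ.filter (fun i => ((f i).isLeft : Prop))).card :=
          Finset.card_pos.mpr ⟨p₀, hp₀mem⟩
        omega
      · -- inv1
        intro i j' hij'
        by_cases hip : i = p₀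
        · rw [hip, hgpq] at hij'; simp at hij'
        · rw [hgpo i hip] at hij'
          cases hfi : f i with
          | inl a =>
            rw [hfi] at hij'
            simp only [Sum.map_inl, id_eq] at hij'
            have : a = j' := by simpa using hij'
            exact inv1 i j' (this ▸ hfi)
          | inr b => rw [hfi] at hij'; simp at hij'
      · -- inv2
        intro b
        refine Fin.lastCases ?_ (fun b' => ?_) b
        · refine ⟨p₀, hgpq, fun i hi => ?_⟩
          replace hi : gp f p₀ i = Sum.inr (Fin.last l) := hi
          by_contra hip
          rw [hgpo i hip] at hi
          cases hfi : f i with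
          | inl a => rw [hfi] at hi; simp at hi
          | inr b'' =>
            rw [hfi] at hi
            simp only [Sum.map_inr] at hi
            have : b''.castSucc = Fin.last l := by simpa using hi
            exact absurd this (Fin.ne_of_lt (Fin.castSucc_lt_last b''))
        · obtain ⟨i₀, hi₀, hi₀u⟩ := inv2 b'
          have hi₀p : i₀ ≠ p₀ := by
            intro hc
            rw [hc, hp₀] at hi₀
            simp at hi₀
          refine ⟨i₀, by show gp f p₀ i₀ = Sum.inr b'.castSucc; rw [hgpo i₀ hi₀p, hi₀]; simp, fun i hi => ?_⟩
          replace hi : gp f p₀ i = Sum.inr b'.castSucc := hi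
          have hip : i ≠ p₀ := by
            intro hc
            rw [hc, hgpq] at hi
            have : Fin.last l = b'.castSucc := by simpa using hi
            exact absurd this.symm (Fin.ne_of_lt (Fin.castSucc_lt_last b'))
          rw [hgpo i hip] at hi
          cases hfi : f i with
          | inl a => rw [hfi] at hi; simp at hi
          | inr b'' =>
            rw [hfi] at hi
            simp only [Sum.map_inr] at hi
            have hbb : b'' = b' := Fin.castSucc_injective l (by simpa using hi)
            exact hi₀u i (hbb ▸ hfi)
      · -- inv4
        intro j'
        obtain ⟨i₁, hi₁⟩ := inv4 j'
        by_cases hip : i₁ = p₀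
        · have hjj : j' = j := by
            rw [hip] at hi₁
            rw [hi₁] at hp₀
            simpa using hp₀
          exact ⟨q₀, by rw [hgpo q₀ hq₀p, hq₀]; simp [hjj]⟩
        · exact ⟨i₁, by rw [hgpo i₁ hip, hi₁]; simp⟩
      · exact hstep
    · push_neg at hdup
      refine terminal blk inv1 inv2 inv4 inv3 ?_
      intro jj a b hfa hfb
      by_contra hab
      exact hdup jj a b hab hfa hfb

end MaxIdentFinal


theorem max_identification_of_variables (k M n : ℕ) (hk : 2 ≤ k)
    (G : Set (Pred k))
    (hfin : { ρ ∈ ppClosure k G | Essential k ρ }.Finite)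
    (blk : Fin M → Fin n) (hmono : Monotone blk) (hsurj : Function.Surjective blk)
    (R : Set (Tuple k n)) (R' : Set (Tuple k M))
    (hmax : (⟨n, R⟩ : Pred k) ∈ MAXset k G)
    (hmem : (⟨M, R'⟩ : Pred k) ∈ ppClosure k G)
    (hid : ∀ x : Tuple k n, x ∈ R ↔ (x ∘ blk) ∈ R') :
    ∃ ι : Fin n → Fin M,
      (∀ j, blk (ι j) = j) ∧
      (∀ x : Tuple k n, x ∈ R ↔ ∃ w ∈ R', ∀ j, w (ι j) = x j) ∧
      (⟨n, R⟩ : Pred k) ∈ strike k ⟨M, R'⟩ := by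
  classical
  have hEss : Essential k ⟨n, R⟩ := hmax.2.1
  have hxs : ∃ v : Tuple k n, (∀ i, ∃ s, Function.update v i s ∈ R) ∧ v ∉ R := by
    by_contra hcon
    push_neg at hcon
    exact (closure_nonEss hcon) hEss
  obtain ⟨xs, hxs2, hxs1⟩ := hxs
  apply key blk hmax hmem hxs1 hxs2 M 0 (fun i => Sum.inl (blk i))
  · calc (Finset.univ.filter fun i => ((Sum.inl (blk i) : Fin n ⊕ Fin 0).isLeft : Prop)).card
        ≤ Finset.univ.card := Finset.card_filter_le _ _
    _ = M := by simp
  · intro i j h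
    simpa using h
  · intro b
    exact b.elim0
  · intro j
    obtain ⟨i, hi⟩ := hsurj j
    exact ⟨i, by rw [hi]⟩
  · intro x
    constructor
    · intro hx
      exact ⟨fun b => b.elim0, (hid x).mp hx⟩
    · rintro ⟨y, hy⟩
      exact (hid x).mpr hy
end
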